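/- arXiv:1901.04064 — 2 statements merged into one kernel-verified Lean document; each statement's English description precedes it below -/
import Mathlib

section
/- Let N be an orchard network and let {a, b} be a cherry or a reticulated cherry of N. If N' is obtained from N by reducing b (when {a,b} is a cherry) or by cutting {a,b} (when {a,b} is a reticulated cherry with b the reticulation leaf), then N' is an orchard network. -/
/-- A finite directed graph on natural-number vertices, with no parallel arcs
(arcs form a `Finset` of ordered pairs). -/
structure Digraph' where
  V : Finset ℕ
  A : Finset (ℕ × ℕ)
  mem_V : ∀ e ∈ A, e.1 ∈ V ∧ e.2 ∈ V

namespace Digraph'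

def inDeg (N : Digraph') (v : ℕ) : ℕ := (N.A.filter (fun e => e.2 = v)).card

def outDeg (N : Digraph') (v : ℕ) : ℕ := (N.A.filter (fun e => e.1 = v)).card

/-- Reachability by a directed path (including paths of length 0). -/
def Reach (N : Digraph') : ℕ → ℕ → Prop :=
  Relation.ReflTransGen (fun u v => (u, v) ∈ N.A)

def Acyclic (N : Digraph') : Prop := ∀ u v, (u, v) ∈ N.A → ¬ N.Reach v u

def IsLeaf (N : Digraph') (v : ℕ) : Prop := v ∈ N.V ∧ N.outDeg v = 0

def IsTreeVertex (N : Digraph') (v : ℕ) : Prop :=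
  v ∈ N.V ∧ N.inDeg v = 1 ∧ N.outDeg v = 2

def IsRet (N : Digraph') (v : ℕ) : Prop :=
  v ∈ N.V ∧ N.inDeg v = 2 ∧ N.outDeg v = 1

/-- `N` is a (binary) phylogenetic network on leaf set `X`. -/
structure IsPhylo (N : Digraph') (X : Finset ℕ) : Prop where
  acyclic : N.Acyclic
  X_sub : X ⊆ N.V
  leafSet : ∀ v ∈ N.V, (N.outDeg v = 0 ↔ v ∈ X)
  root : ∃ ρ ∈ N.V, N.inDeg ρ = 0 ∧ N.outDeg ρ = 2 ∧ ∀ v ∈ N.V, N.Reach ρ v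
  degrees : ∀ v ∈ N.V,
    (N.inDeg v = 0 ∧ N.outDeg v = 2) ∨ (N.inDeg v = 1 ∧ N.outDeg v = 0) ∨
    (N.inDeg v = 1 ∧ N.outDeg v = 2) ∨ (N.inDeg v = 2 ∧ N.outDeg v = 1)

/-- The degenerate single-vertex network. -/
def IsSingle (N : Digraph') : Prop := ∃ x, N.V = {x} ∧ N.A = ∅

/-- `{a, b}` is a cherry: two distinct leaves with a common parent. -/
def IsCherry (N : Digraph') (a b : ℕ) : Prop :=
  a ≠ b ∧ N.IsLeaf a ∧ N.IsLeaf b ∧ ∃ p, (p, a) ∈ N.A ∧ (p, b) ∈ N.A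

/-- `{a, b}` is a reticulated cherry with `b` the reticulation leaf. -/
def IsRetCherry (N : Digraph') (a b : ℕ) : Prop :=
  a ≠ b ∧ N.IsLeaf a ∧ N.IsLeaf b ∧
  ∃ pa pb, (pa, a) ∈ N.A ∧ (pb, b) ∈ N.A ∧ N.inDeg pb = 2 ∧ (pa, pb) ∈ N.A

/-- `N'` is obtained from `N` by reducing the leaf `b` of the cherry `{a, b}`:
delete `b` and suppress the resulting in-degree-1 out-degree-1 vertex
(if the common parent is the root, delete `b` and the root, leaving the single
vertex `a`). -/
def ReduceCherry (N N' : Digraph') (a b : ℕ) : Prop :=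
  N.IsCherry a b ∧ ∃ p, (p, a) ∈ N.A ∧ (p, b) ∈ N.A ∧
    ((N.inDeg p = 0 ∧ N'.V = {a} ∧ N'.A = ∅) ∨
     (∃ u, (u, p) ∈ N.A ∧ N'.V = (N.V.erase b).erase p ∧
        N'.A = insert (u, a) (((N.A.erase (u, p)).erase (p, a)).erase (p, b))))

/-- `N'` is obtained from `N` by cutting the reticulated cherry `{a, b}` with `b`
the reticulation leaf: delete the reticulation arc from the parent of `a` to the
parent of `b`, and suppress the two resulting in-degree-1 out-degree-1 vertices. -/
def CutRetCherry (N N' : Digraph') (a b : ℕ) : Prop :=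
  N.IsRetCherry a b ∧ ∃ pa pb ua q,
    (pa, a) ∈ N.A ∧ (pb, b) ∈ N.A ∧ N.inDeg pb = 2 ∧ (pa, pb) ∈ N.A ∧
    (ua, pa) ∈ N.A ∧ (q, pb) ∈ N.A ∧ q ≠ pa ∧
    N'.V = (N.V.erase pa).erase pb ∧
    N'.A = insert (ua, a) (insert (q, b)
      (((((N.A.erase (pa, pb)).erase (ua, pa)).erase (pa, a)).erase (q, pb)).erase (pb, b)))

/-- A single cherry reduction. -/
def CherryStep (N N' : Digraph') : Prop :=
  ∃ a b, ReduceCherry N N' a b ∨ CutRetCherry N N' a b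

/-- `N` is an orchard network: some sequence of cherry reductions reduces it to a
single vertex. -/
def IsOrchard (N : Digraph') : Prop :=
  ∃ N', Relation.ReflTransGen CherryStep N N' ∧ IsSingle N'

/-- The ancestral set `γ(x)`: the non-leaf vertices from which `x` is reachable. -/
def gamma (N : Digraph') (x : ℕ) : Set ℕ :=
  {v | v ∈ N.V ∧ N.outDeg v ≠ 0 ∧ N.Reach v x}

/-- The number of directed paths in `N` from `u` to `x` (a path is recorded as the
list of its vertices; the single-vertex path counts when `u = x`). -/
noncomputable def numPaths (N : Digraph') (u x : ℕ) : ℕ :=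
  Set.ncard {l : List ℕ | l.head? = some u ∧ l.getLast? = some x ∧
    l.Chain' (fun p q => (p, q) ∈ N.A)}

/-- Tree-sibling: every reticulation has a parent that is also the parent of a
tree vertex or a leaf. -/
def TreeSibling (N : Digraph') : Prop :=
  ∀ v ∈ N.V, N.inDeg v = 2 → ∃ p w, (p, v) ∈ N.A ∧ (p, w) ∈ N.A ∧ w ≠ v ∧
    (N.IsTreeVertex w ∨ N.IsLeaf w)

/-- Time-consistent: there is a temporal labelling of the vertices. -/
def TimeConsistent (N : Digraph') : Prop :=
  ∃ t : ℕ → ℕ, ∀ u v, (u, v) ∈ N.A →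
    (N.inDeg v = 2 → t u = t v) ∧ (N.inDeg v ≠ 2 → t u < t v)

/-- Tree-child: every non-leaf vertex has a child that is a tree vertex or a leaf
(equivalently, a child of in-degree one). -/
def TreeChild (N : Digraph') : Prop :=
  ∀ v ∈ N.V, N.outDeg v ≠ 0 → ∃ w, (v, w) ∈ N.A ∧ N.inDeg w = 1

end Digraph'

open Digraph'
namespace Digraph'

lemma ext' {N M : Digraph'} (hV : N.V = M.V) (hA : N.A = M.A) : N = M := by
  cases N; cases M; simp_all

/-! ### basic degree facts -/

lemma no_out {N : Digraph'} {x : ℕ} (h : N.outDeg x = 0) : ∀ y, (x,y) ∉ N.A := by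
  intro y hy
  have : (x,y) ∈ N.A.filter (fun e => e.1 = x) := by simp [hy]
  rw [Finset.card_eq_zero.1 h] at this
  simp at this

lemma out_ne_zero {N : Digraph'} {x y : ℕ} (h : (x,y) ∈ N.A) : N.outDeg x ≠ 0 :=
  fun hc => no_out hc y h

lemma no_in {N : Digraph'} {x : ℕ} (h : N.inDeg x = 0) : ∀ y, (y,x) ∉ N.A := by
  intro y hy
  have : (y,x) ∈ N.A.filter (fun e => e.2 = x) := by simp [hy]
  rw [Finset.card_eq_zero.1 h] at this
  simp at this

lemma in_ne_zero {N : Digraph'} {x y : ℕ} (h : (y,x) ∈ N.A) : N.inDeg x ≠ 0 :=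
  fun hc => no_in hc y h

lemma uniq_parent {N : Digraph'} {v p q : ℕ} (h : N.inDeg v = 1)
    (hp : (p,v) ∈ N.A) (hq : (q,v) ∈ N.A) : p = q := by
  have hh := Finset.card_le_one.1 (le_of_eq h) _ (by simp [hp] : ((p,v) : ℕ×ℕ) ∈ _) _ (by simp [hq] : ((q,v) : ℕ×ℕ) ∈ _)
  exact congrArg Prod.fst hh

lemma uniq_child {N : Digraph'} {v p q : ℕ} (h : N.outDeg v = 1)
    (hp : (v,p) ∈ N.A) (hq : (v,q) ∈ N.A) : p = q := by
  have hh := Finset.card_le_one.1 (le_of_eq h) _ (by simp [hp] : ((v,p) : ℕ×ℕ) ∈ _) _ (by simp [hq] : ((v,q) : ℕ×ℕ) ∈ _)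
  exact congrArg Prod.snd hh

lemma parents2 {N : Digraph'} {v p q : ℕ} (h : N.inDeg v = 2)
    (hp : (p,v) ∈ N.A) (hq : (q,v) ∈ N.A) (hne : p ≠ q) :
    ∀ r, (r,v) ∈ N.A → r = p ∨ r = q := by
  intro r hr
  have hsub : ({(p,v),(q,v)} : Finset (ℕ×ℕ)) ⊆ N.A.filter (fun e => e.2 = v) := by
    intro e he; simp at he; rcases he with rfl|rfl <;> simp [hp, hq]
  have hcard : (({(p,v),(q,v)} : Finset (ℕ×ℕ))).card = 2 := by
    rw [Finset.card_insert_of_notMem (by simp [hne]), Finset.card_singleton]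
  have heq := Finset.eq_of_subset_of_card_le hsub (by rw [hcard]; exact le_of_eq h)
  have : (r,v) ∈ ({(p,v),(q,v)} : Finset (ℕ×ℕ)) := by
    rw [heq]; simp [hr]
  simp at this
  tauto

lemma children2 {N : Digraph'} {v a b : ℕ} (h : N.outDeg v = 2)
    (ha : (v,a) ∈ N.A) (hb : (v,b) ∈ N.A) (hne : a ≠ b) :
    ∀ x, (v,x) ∈ N.A → x = a ∨ x = b := by
  intro x hx
  have hsub : ({(v,a),(v,b)} : Finset (ℕ×ℕ)) ⊆ N.A.filter (fun e => e.1 = v) := by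
    intro e he; simp at he; rcases he with rfl|rfl <;> simp [ha, hb]
  have hcard : (({(v,a),(v,b)} : Finset (ℕ×ℕ))).card = 2 := by
    rw [Finset.card_insert_of_notMem (by simp [hne]), Finset.card_singleton]
  have heq := Finset.eq_of_subset_of_card_le hsub (by rw [hcard]; exact le_of_eq h)
  have : (v,x) ∈ ({(v,a),(v,b)} : Finset (ℕ×ℕ)) := by rw [heq]; simp [hx]
  simp at this
  tauto

/-! ### GoodDeg -/

def GoodDeg (N : Digraph') : Prop := ∀ v ∈ N.V,
    (N.inDeg v = 0 ∧ N.outDeg v = 2) ∨ (N.inDeg v = 1 ∧ N.outDeg v = 0) ∨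
    (N.inDeg v = 1 ∧ N.outDeg v = 2) ∨ (N.inDeg v = 2 ∧ N.outDeg v = 1)

lemma leaf_inDeg {N : Digraph'} (hg : GoodDeg N) {v : ℕ} (hv : v ∈ N.V)
    (h : N.outDeg v = 0) : N.inDeg v = 1 := by
  rcases hg v hv with ⟨_,h2⟩|⟨h1,_⟩|⟨_,h2⟩|⟨_,h2⟩ <;> omega

lemma outDeg_two {N : Digraph'} (hg : GoodDeg N) {v a b : ℕ}
    (ha : (v,a) ∈ N.A) (hb : (v,b) ∈ N.A) (hne : a ≠ b) : N.outDeg v = 2 := by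
  have hv : v ∈ N.V := (N.mem_V _ ha).1
  have hsub : ({(v,a),(v,b)} : Finset (ℕ×ℕ)) ⊆ N.A.filter (fun e => e.1 = v) := by
    intro e he; simp at he; rcases he with rfl|rfl <;> simp [ha, hb]
  have hcard : (({(v,a),(v,b)} : Finset (ℕ×ℕ))).card = 2 := by
    rw [Finset.card_insert_of_notMem (by simp [hne]), Finset.card_singleton]
  have h2 : 2 ≤ N.outDeg v := by
    rw [← hcard]; exact Finset.card_le_card hsub
  rcases hg v hv with ⟨_,h'⟩|⟨_,h'⟩|⟨_,h'⟩|⟨_,h'⟩ <;> omega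

lemma inDeg_one_of_out_two {N : Digraph'} (hg : GoodDeg N) {v u : ℕ}
    (h2 : N.outDeg v = 2) (h : (u,v) ∈ N.A) : N.inDeg v = 1 := by
  have hv : v ∈ N.V := (N.mem_V _ h).2
  have := in_ne_zero h
  rcases hg v hv with ⟨h1,h'⟩|⟨h1,h'⟩|⟨h1,h'⟩|⟨h1,h'⟩ <;> omega

lemma ret_outDeg {N : Digraph'} (hg : GoodDeg N) {v : ℕ} (hv : v ∈ N.V)
    (h : N.inDeg v = 2) : N.outDeg v = 1 := by
  rcases hg v hv with ⟨h1,_⟩|⟨h1,_⟩|⟨h1,_⟩|⟨_,h'⟩ <;> omega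

end Digraph'
namespace Digraph'

/-! ### Finset helpers -/

lemma fe_skip {s : Finset (ℕ×ℕ)} {P : ℕ×ℕ → Prop} [DecidablePred P] {e : ℕ×ℕ}
    (h : ¬ P e) : (s.erase e).filter P = s.filter P := by
  rw [Finset.filter_erase, Finset.erase_eq_of_notMem]
  simp [Finset.mem_filter]; tauto

lemma fi_pos {s : Finset (ℕ×ℕ)} {P : ℕ×ℕ → Prop} [DecidablePred P] {e : ℕ×ℕ}
    (h : P e) : (insert e s).filter P = insert e (s.filter P) := by
  rw [Finset.filter_insert, if_pos h]

lemma fi_neg {s : Finset (ℕ×ℕ)} {P : ℕ×ℕ → Prop} [DecidablePred P] {e : ℕ×ℕ}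
    (h : ¬ P e) : (insert e s).filter P = s.filter P := by
  rw [Finset.filter_insert, if_neg h]

lemma card_ie {α : Type*} [DecidableEq α] {s : Finset α} {x y : α}
    (hx : x ∈ s) (hy : y ∉ s) : (insert y (s.erase x)).card = s.card := by
  have h1 : y ∉ s.erase x := fun h => hy (Finset.mem_of_mem_erase h)
  rw [Finset.card_insert_of_notMem h1, Finset.card_erase_of_mem hx]
  have := Finset.card_pos.2 ⟨x, hx⟩
  omega

lemma card_ie2 {α : Type*} [DecidableEq α] {s : Finset α} {x1 x2 y1 y2 : α}
    (hx1 : x1 ∈ s) (hx2 : x2 ∈ s) (hx : x1 ≠ x2) (hy1 : y1 ∉ s) (hy2 : y2 ∉ s)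
    (hy : y1 ≠ y2) : (insert y1 (insert y2 ((s.erase x1).erase x2))).card = s.card := by
  have e2 : x2 ∈ s.erase x1 := Finset.mem_erase.2 ⟨fun h => hx h.symm, hx2⟩
  have h2 : y2 ∉ (s.erase x1).erase x2 := fun h =>
    hy2 (Finset.mem_of_mem_erase (Finset.mem_of_mem_erase h))
  have h1 : y1 ∉ insert y2 ((s.erase x1).erase x2) := by
    simp only [Finset.mem_insert]
    rintro (rfl|h)
    · exact hy rfl
    · exact hy1 (Finset.mem_of_mem_erase (Finset.mem_of_mem_erase h))
  rw [Finset.card_insert_of_notMem h1, Finset.card_insert_of_notMem h2,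
    Finset.card_erase_of_mem e2, Finset.card_erase_of_mem hx1]
  have := Finset.one_lt_card.2 ⟨x1, hx1, x2, hx2, hx⟩
  omega

/-! ### patch form -/

lemma ee2 (V : Finset ℕ) (x y : ℕ) : (V.erase x).erase y = V \ {x, y} := by
  ext v; simp [Finset.mem_erase, Finset.mem_sdiff]; tauto

lemma ie3 (A : Finset (ℕ×ℕ)) (f1 f2 f3 e : ℕ×ℕ) :
    insert e (((A.erase f1).erase f2).erase f3) = (A \ {f1, f2, f3}) ∪ {e} := by
  ext x; simp [Finset.mem_insert, Finset.mem_erase, Finset.mem_sdiff]; tauto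

lemma ie5 (A : Finset (ℕ×ℕ)) (f1 f2 f3 f4 f5 e1 e2 : ℕ×ℕ) :
    insert e1 (insert e2 (((((A.erase f1).erase f2).erase f3).erase f4).erase f5))
      = (A \ {f1, f2, f3, f4, f5}) ∪ {e1, e2} := by
  ext x; simp [Finset.mem_insert, Finset.mem_erase, Finset.mem_sdiff]; tauto

lemma patch_comm {A d1 i1 d2 i2 : Finset (ℕ×ℕ)}
    (h12 : ∀ e ∈ i1, e ∉ d2) (h21 : ∀ e ∈ i2, e ∉ d1) :
    ((A \ d1 ∪ i1) \ d2 ∪ i2) = ((A \ d2 ∪ i2) \ d1 ∪ i1) := by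
  ext e
  have a1 := h12 e
  have a2 := h21 e
  simp only [Finset.mem_union, Finset.mem_sdiff]
  tauto

lemma patch_assoc (A d1 i1 d2 i2 : Finset (ℕ×ℕ)) :
    ((A \ d1 ∪ i1) \ d2 ∪ i2) = (A \ (d1 ∪ d2)) ∪ ((i1 \ d2) ∪ i2) := by
  ext e
  simp only [Finset.mem_union, Finset.mem_sdiff]
  tauto

/-! ### orchard basics -/

lemma orch_step {N M : Digraph'} (h : CherryStep N M) (hM : IsOrchard M) :
    IsOrchard N := by
  obtain ⟨F, ch, s⟩ := hM
  exact ⟨F, Relation.ReflTransGen.head h ch, s⟩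

def singleD (x : ℕ) : Digraph' := ⟨{x}, ∅, by simp⟩

lemma single_singleD (x : ℕ) : IsSingle (singleD x) := ⟨x, rfl, rfl⟩

lemma orch_single {N : Digraph'} (h : IsSingle N) : IsOrchard N :=
  ⟨N, Relation.ReflTransGen.refl, h⟩

end Digraph'
namespace Digraph'

/-! ### applying operations -/

lemma applyRed {N : Digraph'} {a b p u : ℕ}
    (hpa : (p,a) ∈ N.A) (hpb : (p,b) ∈ N.A) (hup : (u,p) ∈ N.A)
    (hab : a ≠ b)
    (la : N.outDeg a = 0) (lb : N.outDeg b = 0)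
    (childp : ∀ x, (p,x) ∈ N.A → x = a ∨ x = b)
    (parp : ∀ x, (x,p) ∈ N.A → x = u)
    (parb : ∀ x, (x,b) ∈ N.A → x = p)
    (hpa' : p ≠ a) (hpb' : p ≠ b) (hua : u ≠ a) (hub : u ≠ b) (hup' : u ≠ p) :
    ∃ M : Digraph', ReduceCherry N M a b ∧ M.V = N.V \ {b,p} ∧
      M.A = (N.A \ {(u,p),(p,a),(p,b)}) ∪ {(u,a)} := by
  have haV : a ∈ N.V := (N.mem_V _ hpa).2
  have hbV : b ∈ N.V := (N.mem_V _ hpb).2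
  have huV : u ∈ N.V := (N.mem_V _ hup).1
  refine ⟨⟨N.V \ {b,p}, (N.A \ {(u,p),(p,a),(p,b)}) ∪ {(u,a)}, ?_⟩, ?_, rfl, rfl⟩
  · rintro ⟨x,y⟩ he
    simp only [Finset.mem_union, Finset.mem_sdiff, Finset.mem_singleton,
      Finset.mem_insert, Prod.mk.injEq] at he ⊢
    rcases he with ⟨hA, hne⟩ | ⟨rfl, rfl⟩
    · obtain ⟨hxV, hyV⟩ := N.mem_V _ hA
      refine ⟨⟨hxV, ?_⟩, hyV, ?_⟩
      · rintro (rfl | rfl)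
        · exact no_out lb y hA
        · rcases childp y hA with rfl | rfl
          · exact hne (Or.inr (Or.inl ⟨rfl, rfl⟩))
          · exact hne (Or.inr (Or.inr ⟨rfl, rfl⟩))
      · rintro (rfl | rfl)
        · exact hne (Or.inr (Or.inr ⟨parb x hA, rfl⟩))
        · exact hne (Or.inl ⟨parp x hA, rfl⟩)
    · exact ⟨⟨huV, by push_neg; exact ⟨hub, hup'⟩⟩, haV,
        by push_neg; exact ⟨hab, Ne.symm hpa'⟩⟩
  · refine ⟨⟨hab, ⟨haV, la⟩, ⟨hbV, lb⟩, p, hpa, hpb⟩, p, hpa, hpb,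
      Or.inr ⟨u, hup, ?_, ?_⟩⟩
    · exact (ee2 N.V b p).symm
    · exact (ie3 N.A (u,p) (p,a) (p,b) (u,a)).symm

lemma applyCut {N : Digraph'} {a b pa pb ua q : ℕ}
    (h1 : (pa,a) ∈ N.A) (h2 : (pb,b) ∈ N.A) (h3 : (pa,pb) ∈ N.A)
    (h4 : (ua,pa) ∈ N.A) (h5 : (q,pb) ∈ N.A)
    (hqpa : q ≠ pa) (hab : a ≠ b)
    (la : N.outDeg a = 0) (lb : N.outDeg b = 0) (hinpb : N.inDeg pb = 2)
    (childpa : ∀ x, (pa,x) ∈ N.A → x = a ∨ x = pb)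
    (childpb : ∀ x, (pb,x) ∈ N.A → x = b)
    (parpa : ∀ x, (x,pa) ∈ N.A → x = ua)
    (parpb : ∀ x, (x,pb) ∈ N.A → x = pa ∨ x = q)
    (dpaa : pa ≠ a) (dpab : pa ≠ b) (dpba : pb ≠ a) (dpbb : pb ≠ b)
    (dpapb : pa ≠ pb) (duaa : ua ≠ a) (duab : ua ≠ b) (duapa : ua ≠ pa)
    (duapb : ua ≠ pb) (dqa : q ≠ a) (dqb : q ≠ b) (dqpb : q ≠ pb) :
    ∃ M : Digraph', CutRetCherry N M a b ∧ M.V = N.V \ {pa,pb} ∧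
      M.A = (N.A \ {(pa,pb),(ua,pa),(pa,a),(q,pb),(pb,b)}) ∪ {(ua,a),(q,b)} := by
  have haV : a ∈ N.V := (N.mem_V _ h1).2
  have hbV : b ∈ N.V := (N.mem_V _ h2).2
  have huV : ua ∈ N.V := (N.mem_V _ h4).1
  have hqV : q ∈ N.V := (N.mem_V _ h5).1
  refine ⟨⟨N.V \ {pa,pb}, (N.A \ {(pa,pb),(ua,pa),(pa,a),(q,pb),(pb,b)}) ∪ {(ua,a),(q,b)}, ?_⟩,
    ?_, rfl, rfl⟩
  · rintro ⟨x,y⟩ he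
    simp only [Finset.mem_union, Finset.mem_sdiff, Finset.mem_singleton,
      Finset.mem_insert, Prod.mk.injEq] at he ⊢
    rcases he with ⟨hA, hne⟩ | ⟨rfl, rfl⟩ | ⟨rfl, rfl⟩
    · obtain ⟨hxV, hyV⟩ := N.mem_V _ hA
      refine ⟨⟨hxV, ?_⟩, hyV, ?_⟩
      · rintro (rfl | rfl)
        · rcases childpa y hA with rfl | rfl
          · exact hne (Or.inr (Or.inr (Or.inl ⟨rfl, rfl⟩)))
          · exact hne (Or.inl ⟨rfl, rfl⟩)
        · have := childpb y hA; subst this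
          exact hne (Or.inr (Or.inr (Or.inr (Or.inr ⟨rfl, rfl⟩))))
      · rintro (rfl | rfl)
        · have := parpa x hA; subst this
          exact hne (Or.inr (Or.inl ⟨rfl, rfl⟩))
        · rcases parpb x hA with rfl | rfl
          · exact hne (Or.inl ⟨rfl, rfl⟩)
          · exact hne (Or.inr (Or.inr (Or.inr (Or.inl ⟨rfl, rfl⟩))))
    · exact ⟨⟨huV, by push_neg; exact ⟨duapa, duapb⟩⟩, haV,
        by push_neg; exact ⟨Ne.symm dpaa, Ne.symm dpba⟩⟩
    · exact ⟨⟨hqV, by push_neg; exact ⟨hqpa, dqpb⟩⟩, hbV,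
        by push_neg; exact ⟨Ne.symm dpab, Ne.symm dpbb⟩⟩
  · refine ⟨⟨hab, ⟨haV, la⟩, ⟨hbV, lb⟩, pa, pb, h1, h2, hinpb, h3⟩,
      pa, pb, ua, q, h1, h2, hinpb, h3, h4, h5, hqpa, ?_, ?_⟩
    · exact (ee2 N.V pa pb).symm
    · exact (ie5 N.A (pa,pb) (ua,pa) (pa,a) (q,pb) (pb,b) (ua,a) (q,b)).symm

end Digraph'
namespace Digraph'

/-! ### fact bundles -/

structure RCtx0 (N : Digraph') (a b p : ℕ) : Prop where
  hpa : (p,a) ∈ N.A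
  hpb : (p,b) ∈ N.A
  hab : a ≠ b
  la : N.outDeg a = 0
  lb : N.outDeg b = 0
  ina : N.inDeg a = 1
  inb : N.inDeg b = 1
  outp : N.outDeg p = 2
  childp : ∀ x, (p,x) ∈ N.A → x = a ∨ x = b
  para : ∀ x, (x,a) ∈ N.A → x = p
  parb : ∀ x, (x,b) ∈ N.A → x = p
  npa : p ≠ a
  npb : p ≠ b

structure RCtx (N : Digraph') (a b p u : ℕ) extends RCtx0 N a b p : Prop where
  hup : (u,p) ∈ N.A
  inp : N.inDeg p = 1
  parp : ∀ x, (x,p) ∈ N.A → x = u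
  nua : u ≠ a
  nub : u ≠ b
  nup : u ≠ p
  nuaA : (u,a) ∉ N.A
  nubA : (u,b) ∉ N.A

lemma mkRCtx0 {N : Digraph'} {a b p : ℕ} (hg : GoodDeg N) (hab : a ≠ b)
    (la : N.outDeg a = 0) (lb : N.outDeg b = 0)
    (hpa : (p,a) ∈ N.A) (hpb : (p,b) ∈ N.A) : RCtx0 N a b p := by
  have haV : a ∈ N.V := (N.mem_V _ hpa).2
  have hbV : b ∈ N.V := (N.mem_V _ hpb).2
  have outp : N.outDeg p = 2 := outDeg_two hg hpa hpb hab
  exact ⟨hpa, hpb, hab, la, lb, leaf_inDeg hg haV la, leaf_inDeg hg hbV lb, outp,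
    children2 outp hpa hpb hab,
    fun x hx => uniq_parent (leaf_inDeg hg haV la) hx hpa,
    fun x hx => uniq_parent (leaf_inDeg hg hbV lb) hx hpb,
    fun h => out_ne_zero hpa (h ▸ la), fun h => out_ne_zero hpb (h ▸ lb)⟩

lemma mkRCtx {N : Digraph'} {a b p u : ℕ} (hg : GoodDeg N) (hab : a ≠ b)
    (la : N.outDeg a = 0) (lb : N.outDeg b = 0)
    (hpa : (p,a) ∈ N.A) (hpb : (p,b) ∈ N.A) (hup : (u,p) ∈ N.A) : RCtx N a b p u := by
  have c0 := mkRCtx0 hg hab la lb hpa hpb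
  have inp : N.inDeg p = 1 := inDeg_one_of_out_two hg c0.outp hup
  have nua : u ≠ a := fun h => out_ne_zero hup (h ▸ la)
  have nub : u ≠ b := fun h => out_ne_zero hup (h ▸ lb)
  have nup : u ≠ p := by
    intro h; rw [h] at hup
    rcases c0.childp p hup with h' | h'
    · exact c0.npa h'
    · exact c0.npb h'
  exact ⟨c0, hup, inp, fun x hx => uniq_parent inp hx hup, nua, nub, nup,
    fun h => nup (uniq_parent c0.ina h hpa),
    fun h => nup (uniq_parent c0.inb h hpb)⟩

structure CCtx (N : Digraph') (a b pa pb ua q : ℕ) : Prop where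
  h1 : (pa,a) ∈ N.A
  h2 : (pb,b) ∈ N.A
  h3 : (pa,pb) ∈ N.A
  h4 : (ua,pa) ∈ N.A
  h5 : (q,pb) ∈ N.A
  hqpa : q ≠ pa
  hab : a ≠ b
  la : N.outDeg a = 0
  lb : N.outDeg b = 0
  ina : N.inDeg a = 1
  inb : N.inDeg b = 1
  inpa : N.inDeg pa = 1
  outpa : N.outDeg pa = 2
  inpb : N.inDeg pb = 2
  outpb : N.outDeg pb = 1
  childpa : ∀ x, (pa,x) ∈ N.A → x = a ∨ x = pb
  childpb : ∀ x, (pb,x) ∈ N.A → x = b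
  parpa : ∀ x, (x,pa) ∈ N.A → x = ua
  parpb : ∀ x, (x,pb) ∈ N.A → x = pa ∨ x = q
  para : ∀ x, (x,a) ∈ N.A → x = pa
  parb : ∀ x, (x,b) ∈ N.A → x = pb
  dpaa : pa ≠ a
  dpab : pa ≠ b
  dpba : pb ≠ a
  dpbb : pb ≠ b
  dpapb : pa ≠ pb
  duaa : ua ≠ a
  duab : ua ≠ b
  duapa : ua ≠ pa
  duapb : ua ≠ pb
  dqa : q ≠ a
  dqb : q ≠ b
  dqpb : q ≠ pb
  nuaaA : (ua,a) ∉ N.A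
  nqbA : (q,b) ∉ N.A

lemma mkCCtx {N : Digraph'} {a b pa pb ua q : ℕ} (hg : GoodDeg N) (hab : a ≠ b)
    (la : N.outDeg a = 0) (lb : N.outDeg b = 0)
    (h1 : (pa,a) ∈ N.A) (h2 : (pb,b) ∈ N.A) (h3 : (pa,pb) ∈ N.A)
    (h4 : (ua,pa) ∈ N.A) (h5 : (q,pb) ∈ N.A) (hinpb : N.inDeg pb = 2)
    (hqpa : q ≠ pa) : CCtx N a b pa pb ua q := by
  have haV : a ∈ N.V := (N.mem_V _ h1).2
  have hbV : b ∈ N.V := (N.mem_V _ h2).2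
  have outpb : N.outDeg pb = 1 := ret_outDeg hg (N.mem_V _ h3).2 hinpb
  have napb : a ≠ pb := fun h => out_ne_zero h2 (by rw [← h]; exact la)
  have outpa : N.outDeg pa = 2 := outDeg_two hg h1 h3 napb
  have ina : N.inDeg a = 1 := leaf_inDeg hg haV la
  have inb : N.inDeg b = 1 := leaf_inDeg hg hbV lb
  have childpa := children2 outpa h1 h3 napb
  have childpb : ∀ x, (pb,x) ∈ N.A → x = b := fun x hx => uniq_child outpb hx h2
  have dpaa : pa ≠ a := fun h => out_ne_zero h1 (h ▸ la)
  have dpab : pa ≠ b := fun h => out_ne_zero h1 (h ▸ lb)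
  have dpba : pb ≠ a := fun h => out_ne_zero h2 (h ▸ la)
  have dpbb : pb ≠ b := fun h => out_ne_zero h2 (h ▸ lb)
  have dpapb : pa ≠ pb := fun h => by rw [h, outpb] at outpa; omega
  have duaa : ua ≠ a := fun h => out_ne_zero h4 (h ▸ la)
  have duab : ua ≠ b := fun h => out_ne_zero h4 (h ▸ lb)
  have duapa : ua ≠ pa := by
    intro h; rw [h] at h4
    rcases childpa pa h4 with h' | h'
    · exact dpaa h'
    · exact dpapb h'
  have duapb : ua ≠ pb := by
    intro h; rw [h] at h4
    exact dpab (childpb pa h4)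
  have dqa : q ≠ a := fun h => out_ne_zero h5 (h ▸ la)
  have dqb : q ≠ b := fun h => out_ne_zero h5 (h ▸ lb)
  have dqpb : q ≠ pb := by
    intro h; rw [h] at h5
    exact dpbb (childpb pb h5)
  have inpa : N.inDeg pa = 1 := inDeg_one_of_out_two hg outpa h4
  exact ⟨h1, h2, h3, h4, h5, hqpa, hab, la, lb, ina, inb, inpa, outpa, hinpb, outpb,
    childpa, childpb, fun x hx => uniq_parent inpa hx h4,
    parents2 hinpb h3 h5 (Ne.symm hqpa),
    fun x hx => uniq_parent ina hx h1, fun x hx => uniq_parent inb hx h2,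
    dpaa, dpab, dpba, dpbb, dpapb, duaa, duab, duapa, duapb, dqa, dqb, dqpb,
    fun h => duapa (uniq_parent ina h h1),
    fun h => dqpb (uniq_parent inb h h2)⟩

end Digraph'
namespace Digraph'

/-! ### Good degree preservation -/

lemma goodRed {N N1 : Digraph'} {a b p u : ℕ} (hg : GoodDeg N) (c : RCtx N a b p u)
    (hV : N1.V = (N.V.erase b).erase p)
    (hA : N1.A = insert (u,a) (((N.A.erase (u,p)).erase (p,a)).erase (p,b))) :
    GoodDeg N1 := by
  intro v hv
  rw [hV, Finset.mem_erase, Finset.mem_erase] at hv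
  obtain ⟨hvp, hvb, hvV⟩ := hv
  have hin : N1.inDeg v = N.inDeg v := by
    unfold inDeg
    rw [hA]
    by_cases hva : v = a
    · rw [fi_pos (show ((u,a) : ℕ×ℕ).2 = v from hva.symm),
        fe_skip (show ¬ ((p,b) : ℕ×ℕ).2 = v from fun h => hvb h.symm),
        Finset.filter_erase,
        fe_skip (show ¬ ((u,p) : ℕ×ℕ).2 = v from fun h => hvp h.symm)]
      exact card_ie (by simp [hva, c.hpa]) (by simp [hva, c.nuaA])
    · rw [fi_neg (show ¬ ((u,a) : ℕ×ℕ).2 = v from fun h => hva h.symm),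
        fe_skip (show ¬ ((p,b) : ℕ×ℕ).2 = v from fun h => hvb h.symm),
        fe_skip (show ¬ ((p,a) : ℕ×ℕ).2 = v from fun h => hva h.symm),
        fe_skip (show ¬ ((u,p) : ℕ×ℕ).2 = v from fun h => hvp h.symm)]
  have hout : N1.outDeg v = N.outDeg v := by
    unfold outDeg
    rw [hA]
    by_cases hvu : v = u
    · rw [fi_pos (show ((u,a) : ℕ×ℕ).1 = v from hvu.symm),
        fe_skip (show ¬ ((p,b) : ℕ×ℕ).1 = v from fun h => hvp h.symm),
        fe_skip (show ¬ ((p,a) : ℕ×ℕ).1 = v from fun h => hvp h.symm),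
        Finset.filter_erase]
      exact card_ie (by simp [hvu, c.hup]) (by simp [hvu, c.nuaA])
    · rw [fi_neg (show ¬ ((u,a) : ℕ×ℕ).1 = v from fun h => hvu h.symm),
        fe_skip (show ¬ ((p,b) : ℕ×ℕ).1 = v from fun h => hvp h.symm),
        fe_skip (show ¬ ((p,a) : ℕ×ℕ).1 = v from fun h => hvp h.symm),
        fe_skip (show ¬ ((u,p) : ℕ×ℕ).1 = v from fun h => hvu h.symm)]
  rw [hin, hout]
  exact hg v hvV

lemma goodCut {N N1 : Digraph'} {a b pa pb ua q : ℕ} (hg : GoodDeg N)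
    (c : CCtx N a b pa pb ua q)
    (hV : N1.V = (N.V.erase pa).erase pb)
    (hA : N1.A = insert (ua,a) (insert (q,b)
      (((((N.A.erase (pa,pb)).erase (ua,pa)).erase (pa,a)).erase (q,pb)).erase (pb,b)))) :
    GoodDeg N1 := by
  intro v hv
  rw [hV, Finset.mem_erase, Finset.mem_erase] at hv
  obtain ⟨hvpb, hvpa, hvV⟩ := hv
  have hin : N1.inDeg v = N.inDeg v := by
    unfold inDeg
    rw [hA]
    by_cases hva : v = a
    · have hvb : ¬ v = b := fun h => c.hab ((hva.symm.trans h))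
      rw [fi_pos (show ((ua,a) : ℕ×ℕ).2 = v from hva.symm),
        fi_neg (show ¬ ((q,b) : ℕ×ℕ).2 = v from fun h => hvb h.symm),
        fe_skip (show ¬ ((pb,b) : ℕ×ℕ).2 = v from fun h => hvb h.symm),
        fe_skip (show ¬ ((q,pb) : ℕ×ℕ).2 = v from fun h => hvpb h.symm),
        Finset.filter_erase,
        fe_skip (show ¬ ((ua,pa) : ℕ×ℕ).2 = v from fun h => hvpa h.symm),
        fe_skip (show ¬ ((pa,pb) : ℕ×ℕ).2 = v from fun h => hvpb h.symm)]
      exact card_ie (by simp [hva, c.h1]) (by simp [hva, c.nuaaA])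
    · by_cases hvb : v = b
      · rw [fi_neg (show ¬ ((ua,a) : ℕ×ℕ).2 = v from fun h => hva h.symm),
          fi_pos (show ((q,b) : ℕ×ℕ).2 = v from hvb.symm),
          Finset.filter_erase,
          fe_skip (show ¬ ((q,pb) : ℕ×ℕ).2 = v from fun h => hvpb h.symm),
          fe_skip (show ¬ ((pa,a) : ℕ×ℕ).2 = v from fun h => hva h.symm),
          fe_skip (show ¬ ((ua,pa) : ℕ×ℕ).2 = v from fun h => hvpa h.symm),
          fe_skip (show ¬ ((pa,pb) : ℕ×ℕ).2 = v from fun h => hvpb h.symm)]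
        exact card_ie (by simp [hvb, c.h2]) (by simp [hvb, c.nqbA])
      · rw [fi_neg (show ¬ ((ua,a) : ℕ×ℕ).2 = v from fun h => hva h.symm),
          fi_neg (show ¬ ((q,b) : ℕ×ℕ).2 = v from fun h => hvb h.symm),
          fe_skip (show ¬ ((pb,b) : ℕ×ℕ).2 = v from fun h => hvb h.symm),
          fe_skip (show ¬ ((q,pb) : ℕ×ℕ).2 = v from fun h => hvpb h.symm),
          fe_skip (show ¬ ((pa,a) : ℕ×ℕ).2 = v from fun h => hva h.symm),
          fe_skip (show ¬ ((ua,pa) : ℕ×ℕ).2 = v from fun h => hvpa h.symm),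
          fe_skip (show ¬ ((pa,pb) : ℕ×ℕ).2 = v from fun h => hvpb h.symm)]
  have hout : N1.outDeg v = N.outDeg v := by
    unfold outDeg
    rw [hA]
    by_cases hvua : v = ua
    · by_cases hvq : v = q
      · rw [fi_pos (show ((ua,a) : ℕ×ℕ).1 = v from hvua.symm),
          fi_pos (show ((q,b) : ℕ×ℕ).1 = v from hvq.symm),
          fe_skip (show ¬ ((pb,b) : ℕ×ℕ).1 = v from fun h => hvpb h.symm),
          Finset.filter_erase,
          fe_skip (show ¬ ((pa,a) : ℕ×ℕ).1 = v from fun h => hvpa h.symm),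
          Finset.filter_erase,
          fe_skip (show ¬ ((pa,pb) : ℕ×ℕ).1 = v from fun h => hvpa h.symm)]
        exact card_ie2 (by simp [hvua, c.h4]) (by simp [hvq, c.h5])
          (by simp [Prod.ext_iff, c.dpapb])
          (by simp [hvua, c.nuaaA]) (by simp [hvq, c.nqbA])
          (by simp [Prod.ext_iff, c.hab])
      · rw [fi_pos (show ((ua,a) : ℕ×ℕ).1 = v from hvua.symm),
          fi_neg (show ¬ ((q,b) : ℕ×ℕ).1 = v from fun h => hvq h.symm),
          fe_skip (show ¬ ((pb,b) : ℕ×ℕ).1 = v from fun h => hvpb h.symm),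
          fe_skip (show ¬ ((q,pb) : ℕ×ℕ).1 = v from fun h => hvq h.symm),
          fe_skip (show ¬ ((pa,a) : ℕ×ℕ).1 = v from fun h => hvpa h.symm),
          Finset.filter_erase,
          fe_skip (show ¬ ((pa,pb) : ℕ×ℕ).1 = v from fun h => hvpa h.symm)]
        exact card_ie (by simp [hvua, c.h4]) (by simp [hvua, c.nuaaA])
    · by_cases hvq : v = q
      · rw [fi_neg (show ¬ ((ua,a) : ℕ×ℕ).1 = v from fun h => hvua h.symm),
          fi_pos (show ((q,b) : ℕ×ℕ).1 = v from hvq.symm),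
          fe_skip (show ¬ ((pb,b) : ℕ×ℕ).1 = v from fun h => hvpb h.symm),
          Finset.filter_erase,
          fe_skip (show ¬ ((pa,a) : ℕ×ℕ).1 = v from fun h => hvpa h.symm),
          fe_skip (show ¬ ((ua,pa) : ℕ×ℕ).1 = v from fun h => hvua h.symm),
          fe_skip (show ¬ ((pa,pb) : ℕ×ℕ).1 = v from fun h => hvpa h.symm)]
        exact card_ie (by simp [hvq, c.h5]) (by simp [hvq, c.nqbA])
      · rw [fi_neg (show ¬ ((ua,a) : ℕ×ℕ).1 = v from fun h => hvua h.symm),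
          fi_neg (show ¬ ((q,b) : ℕ×ℕ).1 = v from fun h => hvq h.symm),
          fe_skip (show ¬ ((pb,b) : ℕ×ℕ).1 = v from fun h => hvpb h.symm),
          fe_skip (show ¬ ((q,pb) : ℕ×ℕ).1 = v from fun h => hvq h.symm),
          fe_skip (show ¬ ((pa,a) : ℕ×ℕ).1 = v from fun h => hvpa h.symm),
          fe_skip (show ¬ ((ua,pa) : ℕ×ℕ).1 = v from fun h => hvua h.symm),
          fe_skip (show ¬ ((pa,pb) : ℕ×ℕ).1 = v from fun h => hvpa h.symm)]
  rw [hin, hout]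
  exact hg v hvV

end Digraph'
namespace Digraph'

/-! ### relabeling -/

variable (σ : ℕ ≃ ℕ)

lemma pm_inj : Function.Injective (Prod.map σ σ) :=
  Function.Injective.prodMap σ.injective σ.injective

def mapD (N : Digraph') : Digraph' where
  V := N.V.image σ
  A := N.A.image (Prod.map σ σ)
  mem_V := by
    intro e he
    rw [Finset.mem_image] at he
    obtain ⟨f, hf, rfl⟩ := he
    obtain ⟨h1, h2⟩ := N.mem_V f hf
    exact ⟨Finset.mem_image_of_mem _ h1, Finset.mem_image_of_mem _ h2⟩

lemma mapD_outDeg (N : Digraph') (v : ℕ) : (mapD σ N).outDeg (σ v) = N.outDeg v := by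
  unfold outDeg
  have : ((mapD σ N).A.filter (fun e => e.1 = σ v))
      = (N.A.filter (fun e => e.1 = v)).image (Prod.map σ σ) := by
    ext e
    simp only [mapD, Finset.mem_filter, Finset.mem_image]
    constructor
    · rintro ⟨⟨f, hf, rfl⟩, h1⟩
      exact ⟨f, ⟨hf, σ.injective (by simpa using h1)⟩, rfl⟩
    · rintro ⟨f, ⟨hf, h1⟩, rfl⟩
      exact ⟨⟨f, hf, rfl⟩, by simp [h1]⟩
  rw [this, Finset.card_image_of_injective _ (pm_inj σ)]

lemma mapD_inDeg (N : Digraph') (v : ℕ) : (mapD σ N).inDeg (σ v) = N.inDeg v := by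
  unfold inDeg
  have : ((mapD σ N).A.filter (fun e => e.2 = σ v))
      = (N.A.filter (fun e => e.2 = v)).image (Prod.map σ σ) := by
    ext e
    simp only [mapD, Finset.mem_filter, Finset.mem_image]
    constructor
    · rintro ⟨⟨f, hf, rfl⟩, h1⟩
      exact ⟨f, ⟨hf, σ.injective (by simpa using h1)⟩, rfl⟩
    · rintro ⟨f, ⟨hf, h1⟩, rfl⟩
      exact ⟨⟨f, hf, rfl⟩, by simp [h1]⟩
  rw [this, Finset.card_image_of_injective _ (pm_inj σ)]

lemma mapD_arc {N : Digraph'} {x y : ℕ} (h : (x,y) ∈ N.A) :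
    (σ x, σ y) ∈ (mapD σ N).A := by
  have : ((σ x, σ y) : ℕ×ℕ) = Prod.map σ σ (x,y) := rfl
  rw [this]
  exact Finset.mem_image_of_mem _ h

lemma mapD_leaf {N : Digraph'} {v : ℕ} (h : N.IsLeaf v) : (mapD σ N).IsLeaf (σ v) :=
  ⟨Finset.mem_image_of_mem _ h.1, by rw [mapD_outDeg]; exact h.2⟩

lemma mapD_reduce {N M : Digraph'} {a b : ℕ} (h : ReduceCherry N M a b) :
    ReduceCherry (mapD σ N) (mapD σ M) (σ a) (σ b) := by
  obtain ⟨⟨hab, hla, hlb, _⟩, p, hpa, hpb, hbr⟩ := h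
  refine ⟨⟨fun hh => hab (σ.injective hh), mapD_leaf σ hla, mapD_leaf σ hlb,
    σ p, mapD_arc σ hpa, mapD_arc σ hpb⟩, σ p, mapD_arc σ hpa, mapD_arc σ hpb, ?_⟩
  rcases hbr with ⟨h0, hV, hA⟩ | ⟨u, hup, hV, hA⟩
  · refine Or.inl ⟨by rw [mapD_inDeg]; exact h0, ?_, ?_⟩
    · show M.V.image σ = _
      rw [hV]; simp
    · show M.A.image _ = _
      rw [hA]; simp
  · refine Or.inr ⟨σ u, mapD_arc σ hup, ?_, ?_⟩
    · show M.V.image σ = _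
      rw [hV, Finset.image_erase σ.injective, Finset.image_erase σ.injective]
      rfl
    · show M.A.image _ = _
      rw [hA, Finset.image_insert, Finset.image_erase (pm_inj σ),
        Finset.image_erase (pm_inj σ), Finset.image_erase (pm_inj σ)]
      rfl

lemma mapD_cut {N M : Digraph'} {a b : ℕ} (h : CutRetCherry N M a b) :
    CutRetCherry (mapD σ N) (mapD σ M) (σ a) (σ b) := by
  obtain ⟨⟨hab, hla, hlb, _⟩, pa, pb, ua, q, h1, h2, hin, h3, h4, h5, hq, hV, hA⟩ := h
  refine ⟨⟨fun hh => hab (σ.injective hh), mapD_leaf σ hla, mapD_leaf σ hlb,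
    σ pa, σ pb, mapD_arc σ h1, mapD_arc σ h2, by rw [mapD_inDeg]; exact hin,
    mapD_arc σ h3⟩,
    σ pa, σ pb, σ ua, σ q, mapD_arc σ h1, mapD_arc σ h2,
    by rw [mapD_inDeg]; exact hin, mapD_arc σ h3, mapD_arc σ h4, mapD_arc σ h5,
    fun hh => hq (σ.injective hh), ?_, ?_⟩
  · show M.V.image σ = _
    rw [hV, Finset.image_erase σ.injective, Finset.image_erase σ.injective]
    rfl
  · show M.A.image _ = _
    rw [hA, Finset.image_insert, Finset.image_insert, Finset.image_erase (pm_inj σ),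
      Finset.image_erase (pm_inj σ), Finset.image_erase (pm_inj σ),
      Finset.image_erase (pm_inj σ), Finset.image_erase (pm_inj σ)]
    rfl

lemma mapD_orch {N : Digraph'} (h : IsOrchard N) : IsOrchard (mapD σ N) := by
  obtain ⟨F, ch, x, hV, hA⟩ := h
  refine ⟨mapD σ F, ?_, σ x, by rw [show (mapD σ F).V = F.V.image σ from rfl, hV]; simp,
    by rw [show (mapD σ F).A = F.A.image _ from rfl, hA]; simp⟩
  refine Relation.ReflTransGen.lift (mapD σ) ?_ _ _ ch
  rintro N1 N2 ⟨a, b, hr | hc⟩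
  · exact ⟨σ a, σ b, Or.inl (mapD_reduce σ hr)⟩
  · exact ⟨σ a, σ b, Or.inr (mapD_cut σ hc)⟩

lemma image_swap_eq {a b : ℕ} {s : Finset ℕ} (ha : a ∈ s) (hb : b ∈ s) :
    s.image (Equiv.swap a b) = s := by
  ext x
  simp only [Finset.mem_image]
  constructor
  · rintro ⟨y, hy, rfl⟩
    by_cases h1 : y = a
    · subst h1; rwa [Equiv.swap_apply_left]
    · by_cases h2 : y = b
      · subst h2; rwa [Equiv.swap_apply_right]
      · rwa [Equiv.swap_apply_of_ne_of_ne h1 h2]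
  · intro hx
    refine ⟨Equiv.swap a b x, ?_, Equiv.swap_apply_self a b x⟩
    by_cases h1 : x = a
    · subst h1; rwa [Equiv.swap_apply_left]
    · by_cases h2 : x = b
      · subst h2; rwa [Equiv.swap_apply_right]
      · rwa [Equiv.swap_apply_of_ne_of_ne h1 h2]

lemma image_swap_A {N : Digraph'} {a b p u : ℕ} (c : RCtx N a b p u) :
    N.A.image (Prod.map (Equiv.swap a b) (Equiv.swap a b)) = N.A := by
  apply Finset.eq_of_subset_of_card_le
  · rw [Finset.image_subset_iff]
    rintro ⟨x, y⟩ hxy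
    have hxa : x ≠ a := fun h => no_out c.la y (h ▸ hxy)
    have hxb : x ≠ b := fun h => no_out c.lb y (h ▸ hxy)
    have hx : Equiv.swap a b x = x := Equiv.swap_apply_of_ne_of_ne hxa hxb
    by_cases h1 : y = a
    · subst h1
      have := c.para x hxy; subst this
      simpa [hx, Equiv.swap_apply_left] using c.hpb
    · by_cases h2 : y = b
      · subst h2
        have := c.parb x hxy; subst this
        simpa [hx, Equiv.swap_apply_right] using c.hpa
      · simpa [hx, Equiv.swap_apply_of_ne_of_ne h1 h2] using hxy
  · rw [Finset.card_image_of_injective _ (pm_inj _)]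

end Digraph'
namespace Digraph'

/-! ### the swap case: reducing the other leaf of the same cherry -/

lemma swap_case {N N1 N' : Digraph'} {a b p u : ℕ} (c : RCtx N a b p u)
    (h1V : N1.V = (N.V.erase a).erase p)
    (h1A : N1.A = insert (u,b) (((N.A.erase (u,p)).erase (p,b)).erase (p,a)))
    (hV' : N'.V = (N.V.erase b).erase p)
    (hA' : N'.A = insert (u,a) (((N.A.erase (u,p)).erase (p,a)).erase (p,b)))
    (horch : IsOrchard N1) : IsOrchard N' := by
  set σ := Equiv.swap a b with hσ
  have hsa : σ a = b := Equiv.swap_apply_left a b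
  have hsb : σ b = a := Equiv.swap_apply_right a b
  have hsp : σ p = p := Equiv.swap_apply_of_ne_of_ne c.npa c.npb
  have hsu : σ u = u := Equiv.swap_apply_of_ne_of_ne c.nua c.nub
  have haV : a ∈ N.V := (N.mem_V _ c.hpa).2
  have hbV : b ∈ N.V := (N.mem_V _ c.hpb).2
  have key : N' = mapD σ N1 := by
    apply ext'
    · show N'.V = N1.V.image σ
      rw [hV', h1V, Finset.image_erase σ.injective, Finset.image_erase σ.injective,
        image_swap_eq haV hbV, hsa, hsp]
    · show N'.A = N1.A.image (Prod.map σ σ)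
      rw [hA', h1A, Finset.image_insert, Finset.image_erase (pm_inj σ),
        Finset.image_erase (pm_inj σ), Finset.image_erase (pm_inj σ), image_swap_A c]
      have e1 : Prod.map σ σ ((u,b) : ℕ×ℕ) = (u,a) := by simp [Prod.map, hsu, hsb]
      have e2 : Prod.map σ σ ((u,p) : ℕ×ℕ) = (u,p) := by simp [Prod.map, hsu, hsp]
      have e3 : Prod.map σ σ ((p,b) : ℕ×ℕ) = (p,a) := by simp [Prod.map, hsp, hsb]
      have e4 : Prod.map σ σ ((p,a) : ℕ×ℕ) = (p,b) := by simp [Prod.map, hsp, hsa]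
      rw [e1, e2, e3, e4]
  rw [key]
  exact mapD_orch σ horch

/-! ### classification of overlapping pairs -/

lemma RR_cases {N : Digraph'} {a b p c d p' : ℕ}
    (c1 : RCtx0 N a b p) (c2 : RCtx0 N c d p') :
    (a = c ∧ b = d ∧ p = p') ∨ (a = d ∧ b = c ∧ p = p') ∨
    (a ≠ c ∧ a ≠ d ∧ b ≠ c ∧ b ≠ d) := by
  by_cases hbd : b = d
  · subst hbd
    have hpp : p = p' := c2.parb p c1.hpb
    subst hpp
    rcases c2.childp a c1.hpa with rfl | rfl
    · exact Or.inl ⟨rfl, rfl, rfl⟩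
    · exact absurd rfl c1.hab
  · by_cases hbc : b = c
    · subst hbc
      have hpp : p = p' := c2.para p c1.hpb
      subst hpp
      rcases c1.childp d c2.hpb with rfl | rfl
      · exact Or.inr (Or.inl ⟨rfl, rfl, rfl⟩)
      · exact absurd rfl hbd
    · by_cases had : a = d
      · subst had
        have hpp : p = p' := c2.parb p c1.hpa
        subst hpp
        rcases c1.childp c c2.hpa with rfl | rfl
        · exact absurd rfl (Ne.symm c2.hab)
        · exact absurd rfl (Ne.symm hbc)
      · by_cases hac : a = c
        · subst hac
          have hpp : p = p' := c2.para p c1.hpa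
          subst hpp
          rcases c1.childp d c2.hpb with rfl | rfl
          · exact absurd rfl c2.hab
          · exact absurd rfl hbd
        · exact Or.inr (Or.inr ⟨hac, had, hbc, hbd⟩)

lemma RC_disj {N : Digraph'} {a b p c d pc pd uc r : ℕ}
    (c1 : RCtx0 N a b p) (c2 : CCtx N c d pc pd uc r) :
    a ≠ c ∧ a ≠ d ∧ b ≠ c ∧ b ≠ d := by
  refine ⟨?_, ?_, ?_, ?_⟩
  · intro h; subst h
    have hpp : p = pc := c2.para p c1.hpa
    subst hpp
    rcases c1.childp pd c2.h3 with rfl | rfl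
    · exact out_ne_zero c2.h2 c1.la
    · exact out_ne_zero c2.h2 c1.lb
  · intro h; subst h
    have hpp : p = pd := c2.parb p c1.hpa
    have h1 := c2.outpb
    rw [← hpp, c1.outp] at h1
    omega
  · intro h; subst h
    have hpp : p = pc := c2.para p c1.hpb
    subst hpp
    rcases c1.childp pd c2.h3 with rfl | rfl
    · exact out_ne_zero c2.h2 c1.la
    · exact out_ne_zero c2.h2 c1.lb
  · intro h; subst h
    have hpp : p = pd := c2.parb p c1.hpb
    have h1 := c2.outpb
    rw [← hpp, c1.outp] at h1
    omega

end Digraph'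
namespace Digraph'

lemma pne1 {x y z w : ℕ} (h : x ≠ z) : ((x,y) : ℕ×ℕ) ≠ (z,w) :=
  fun he => h (congrArg Prod.fst he)

lemma pne2 {x y z w : ℕ} (h : y ≠ w) : ((x,y) : ℕ×ℕ) ≠ (z,w) :=
  fun he => h (congrArg Prod.snd he)

lemma mem_ie3 {A : Finset (ℕ×ℕ)} {f1 f2 f3 e x : ℕ×ℕ} :
    x ∈ insert e (((A.erase f1).erase f2).erase f3) ↔
      x = e ∨ (x ≠ f1 ∧ x ≠ f2 ∧ x ≠ f3 ∧ x ∈ A) := by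
  simp only [Finset.mem_insert, Finset.mem_erase]
  tauto

lemma mem_ie5 {A : Finset (ℕ×ℕ)} {f1 f2 f3 f4 f5 e1 e2 x : ℕ×ℕ} :
    x ∈ insert e1 (insert e2 (((((A.erase f1).erase f2).erase f3).erase f4).erase f5)) ↔
      x = e1 ∨ x = e2 ∨ (x ≠ f1 ∧ x ≠ f2 ∧ x ≠ f3 ∧ x ≠ f4 ∧ x ≠ f5 ∧ x ∈ A) := by
  simp only [Finset.mem_insert, Finset.mem_erase]
  tauto

lemma CC_cases {N : Digraph'} {a b pa pb ua q c d pc pd uc r : ℕ}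
    (c1 : CCtx N a b pa pb ua q) (c2 : CCtx N c d pc pd uc r) :
    (a = c ∧ b = d ∧ pa = pc ∧ pb = pd ∧ ua = uc ∧ q = r) ∨
    (a ≠ c ∧ b = d ∧ pb = pd ∧ pc = q ∧ r = pa) ∨
    (a ≠ c ∧ a ≠ d ∧ b ≠ c ∧ b ≠ d) := by
  by_cases hac : a = c
  · subst hac
    have hp : pa = pc := c2.para pa c1.h1
    have hpd : pb = pd := by
      rcases c2.childpa pb (hp ▸ c1.h3) with h | h
      · exact absurd h c1.dpba
      · exact h
    have hbd : b = d := c2.childpb b (hpd ▸ c1.h2)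
    have hua : ua = uc := c2.parpa ua (hp ▸ c1.h4)
    have hqr : q = r := by
      rcases c2.parpb q (hpd ▸ c1.h5) with h | h
      · exact absurd (h.trans hp.symm) c1.hqpa
      · exact h
    exact Or.inl ⟨rfl, hbd, hp, hpd, hua, hqr⟩
  · by_cases hbd : b = d
    · subst hbd
      have hpd : pb = pd := c2.parb pb c1.h2
      have hq : pc = q := by
        rcases c1.parpb pc (hpd ▸ c2.h3) with h | h
        · exfalso
          rcases c1.childpa c (h ▸ c2.h1) with h' | h'
          · exact hac h'.symm
          · exact out_ne_zero c1.h2 (h' ▸ c2.la)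
        · exact h
      have hr : r = pa := by
        rcases c1.parpb r (hpd ▸ c2.h5) with h | h
        · exact h
        · exact absurd (h.trans hq.symm) c2.hqpa
      exact Or.inr (Or.inl ⟨hac, rfl, hpd, hq, hr⟩)
    · by_cases hbc : b = c
      · exfalso
        subst hbc
        have hp : pb = pc := c2.para pb c1.h2
        have h1 := c2.outpa
        rw [← hp, c1.outpb] at h1
        omega
      · by_cases had : a = d
        · exfalso
          subst had
          have hp : pa = pd := c2.parb pa c1.h1
          have h1 := c2.outpb
          rw [← hp, c1.outpa] at h1
          omega
        · exact Or.inr (Or.inr ⟨hac, had, hbc, hbd⟩)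

/-! ### the case where the first step of the sequence deletes the root -/

lemma root_persist {N' : Digraph'} {c d p' : ℕ} (hcd : c ≠ d)
    (hcV : c ∈ N'.V) (hdV : d ∈ N'.V) (hc0 : N'.outDeg c = 0) (hd0 : N'.outDeg d = 0)
    (hpc : (p',c) ∈ N'.A) (hpd : (p',d) ∈ N'.A) (hin0 : N'.inDeg p' = 0) :
    IsOrchard N' :=
  orch_step ⟨c, d, Or.inl ⟨⟨hcd, ⟨hcV, hc0⟩, ⟨hdV, hd0⟩, p', hpc, hpd⟩,
    p', hpc, hpd, Or.inl ⟨hin0, rfl, rfl⟩⟩⟩ (orch_single (single_singleD c))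

lemma rootRed {N N' : Digraph'} {a b p u c d p' : ℕ}
    (c1 : RCtx N a b p u) (c2 : RCtx0 N c d p') (hroot : N.inDeg p' = 0)
    (hdisj : a ≠ c ∧ a ≠ d ∧ b ≠ c ∧ b ≠ d)
    (hV' : N'.V = (N.V.erase b).erase p)
    (hA' : N'.A = insert (u,a) (((N.A.erase (u,p)).erase (p,a)).erase (p,b))) :
    IsOrchard N' := by
  obtain ⟨hac, had, hbc, hbd⟩ := hdisj
  have hpp : p ≠ p' := fun h => in_ne_zero c1.hup (h ▸ hroot)
  have hup' : u ≠ p' := by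
    intro h; subst h
    rcases c2.childp p c1.hup with h | h
    · exact out_ne_zero c1.hpa (h ▸ c2.la)
    · exact out_ne_zero c1.hpa (h ▸ c2.lb)
  have huc : u ≠ c := fun h => out_ne_zero c1.hup (h ▸ c2.la)
  have hud : u ≠ d := fun h => out_ne_zero c1.hup (h ▸ c2.lb)
  have hpc : p ≠ c := fun h => out_ne_zero c1.hpa (h ▸ c2.la)
  have hpd : p ≠ d := fun h => out_ne_zero c1.hpa (h ▸ c2.lb)
  have hap' : a ≠ p' := fun h => out_ne_zero c2.hpa (h ▸ c1.la)
  have hbp' : b ≠ p' := fun h => out_ne_zero c2.hpa (h ▸ c1.lb)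
  refine root_persist (p' := p') c2.hab ?_ ?_ ?_ ?_ ?_ ?_ ?_
  · rw [hV', Finset.mem_erase, Finset.mem_erase]
    exact ⟨Ne.symm hpc, Ne.symm hbc, (N.mem_V _ c2.hpa).2⟩
  · rw [hV', Finset.mem_erase, Finset.mem_erase]
    exact ⟨Ne.symm hpd, Ne.symm hbd, (N.mem_V _ c2.hpb).2⟩
  · unfold outDeg
    rw [hA', fi_neg (show ¬ ((u,a) : ℕ×ℕ).1 = c from huc),
      fe_skip (show ¬ ((p,b) : ℕ×ℕ).1 = c from hpc),
      fe_skip (show ¬ ((p,a) : ℕ×ℕ).1 = c from hpc),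
      fe_skip (show ¬ ((u,p) : ℕ×ℕ).1 = c from huc)]
    exact c2.la
  · unfold outDeg
    rw [hA', fi_neg (show ¬ ((u,a) : ℕ×ℕ).1 = d from hud),
      fe_skip (show ¬ ((p,b) : ℕ×ℕ).1 = d from hpd),
      fe_skip (show ¬ ((p,a) : ℕ×ℕ).1 = d from hpd),
      fe_skip (show ¬ ((u,p) : ℕ×ℕ).1 = d from hud)]
    exact c2.lb
  · rw [hA', mem_ie3]
    exact Or.inr ⟨pne2 (Ne.symm hpc), pne1 (Ne.symm hpp), pne1 (Ne.symm hpp), c2.hpa⟩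
  · rw [hA', mem_ie3]
    exact Or.inr ⟨pne2 (Ne.symm hpd), pne1 (Ne.symm hpp), pne1 (Ne.symm hpp), c2.hpb⟩
  · unfold inDeg
    rw [hA', fi_neg (show ¬ ((u,a) : ℕ×ℕ).2 = p' from hap'),
      fe_skip (show ¬ ((p,b) : ℕ×ℕ).2 = p' from hbp'),
      fe_skip (show ¬ ((p,a) : ℕ×ℕ).2 = p' from hap'),
      fe_skip (show ¬ ((u,p) : ℕ×ℕ).2 = p' from hpp)]
    exact hroot

lemma rootCut {N N' : Digraph'} {a b pa pb ua q c d p' : ℕ}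
    (c1 : CCtx N a b pa pb ua q) (c2 : RCtx0 N c d p') (hroot : N.inDeg p' = 0)
    (hV' : N'.V = (N.V.erase pa).erase pb)
    (hA' : N'.A = insert (ua,a) (insert (q,b)
      (((((N.A.erase (pa,pb)).erase (ua,pa)).erase (pa,a)).erase (q,pb)).erase (pb,b)))) :
    IsOrchard N' := by
  obtain ⟨hca, hda, hcb, hdb⟩ := RC_disj c2 c1
  have hpap' : pa ≠ p' := fun h => in_ne_zero c1.h4 (h ▸ hroot)
  have hpbp' : pb ≠ p' := fun h => in_ne_zero c1.h5 (h ▸ hroot)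
  have huap' : ua ≠ p' := by
    intro h; subst h
    rcases c2.childp pa c1.h4 with h | h
    · exact out_ne_zero c1.h1 (h ▸ c2.la)
    · exact out_ne_zero c1.h1 (h ▸ c2.lb)
  have hqp' : q ≠ p' := by
    intro h; subst h
    rcases c2.childp pb c1.h5 with h | h
    · exact out_ne_zero c1.h2 (h ▸ c2.la)
    · exact out_ne_zero c1.h2 (h ▸ c2.lb)
  have huac : ua ≠ c := fun h => out_ne_zero c1.h4 (h ▸ c2.la)
  have huad : ua ≠ d := fun h => out_ne_zero c1.h4 (h ▸ c2.lb)
  have hqc : q ≠ c := fun h => out_ne_zero c1.h5 (h ▸ c2.la)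
  have hqd : q ≠ d := fun h => out_ne_zero c1.h5 (h ▸ c2.lb)
  have hpac : pa ≠ c := fun h => out_ne_zero c1.h1 (h ▸ c2.la)
  have hpad : pa ≠ d := fun h => out_ne_zero c1.h1 (h ▸ c2.lb)
  have hpbc : pb ≠ c := fun h => out_ne_zero c1.h2 (h ▸ c2.la)
  have hpbd : pb ≠ d := fun h => out_ne_zero c1.h2 (h ▸ c2.lb)
  have hap' : a ≠ p' := fun h => out_ne_zero c2.hpa (h ▸ c1.la)
  have hbp' : b ≠ p' := fun h => out_ne_zero c2.hpa (h ▸ c1.lb)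
  refine root_persist (p' := p') c2.hab ?_ ?_ ?_ ?_ ?_ ?_ ?_
  · rw [hV', Finset.mem_erase, Finset.mem_erase]
    exact ⟨Ne.symm hpbc, Ne.symm hpac, (N.mem_V _ c2.hpa).2⟩
  · rw [hV', Finset.mem_erase, Finset.mem_erase]
    exact ⟨Ne.symm hpbd, Ne.symm hpad, (N.mem_V _ c2.hpb).2⟩
  · unfold outDeg
    rw [hA', fi_neg (show ¬ ((ua,a) : ℕ×ℕ).1 = c from huac),
      fi_neg (show ¬ ((q,b) : ℕ×ℕ).1 = c from hqc),
      fe_skip (show ¬ ((pb,b) : ℕ×ℕ).1 = c from hpbc),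
      fe_skip (show ¬ ((q,pb) : ℕ×ℕ).1 = c from hqc),
      fe_skip (show ¬ ((pa,a) : ℕ×ℕ).1 = c from hpac),
      fe_skip (show ¬ ((ua,pa) : ℕ×ℕ).1 = c from huac),
      fe_skip (show ¬ ((pa,pb) : ℕ×ℕ).1 = c from hpac)]
    exact c2.la
  · unfold outDeg
    rw [hA', fi_neg (show ¬ ((ua,a) : ℕ×ℕ).1 = d from huad),
      fi_neg (show ¬ ((q,b) : ℕ×ℕ).1 = d from hqd),
      fe_skip (show ¬ ((pb,b) : ℕ×ℕ).1 = d from hpbd),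
      fe_skip (show ¬ ((q,pb) : ℕ×ℕ).1 = d from hqd),
      fe_skip (show ¬ ((pa,a) : ℕ×ℕ).1 = d from hpad),
      fe_skip (show ¬ ((ua,pa) : ℕ×ℕ).1 = d from huad),
      fe_skip (show ¬ ((pa,pb) : ℕ×ℕ).1 = d from hpad)]
    exact c2.lb
  · rw [hA', mem_ie5]
    exact Or.inr (Or.inr ⟨pne1 (Ne.symm hpap'), pne2 (Ne.symm hpac),
      pne1 (Ne.symm hpap'), pne2 (Ne.symm hpbc), pne1 (Ne.symm hpbp'), c2.hpa⟩)
  · rw [hA', mem_ie5]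
    exact Or.inr (Or.inr ⟨pne1 (Ne.symm hpap'), pne2 (Ne.symm hpad),
      pne1 (Ne.symm hpap'), pne2 (Ne.symm hpbd), pne1 (Ne.symm hpbp'), c2.hpb⟩)
  · unfold inDeg
    rw [hA', fi_neg (show ¬ ((ua,a) : ℕ×ℕ).2 = p' from hap'),
      fi_neg (show ¬ ((q,b) : ℕ×ℕ).2 = p' from hbp'),
      fe_skip (show ¬ ((pb,b) : ℕ×ℕ).2 = p' from hbp'),
      fe_skip (show ¬ ((q,pb) : ℕ×ℕ).2 = p' from hpbp'),
      fe_skip (show ¬ ((pa,a) : ℕ×ℕ).2 = p' from hap'),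
      fe_skip (show ¬ ((ua,pa) : ℕ×ℕ).2 = p' from hpap'),
      fe_skip (show ¬ ((pa,pb) : ℕ×ℕ).2 = p' from hpbp')]
    exact hroot

end Digraph'
namespace Digraph'

lemma not_mem_triple {x y1 y2 y3 : ℕ×ℕ} (h1 : x ≠ y1) (h2 : x ≠ y2) (h3 : x ≠ y3) :
    x ∉ ({y1,y2,y3} : Finset (ℕ×ℕ)) := by simp [h1, h2, h3]

lemma not_mem_five {x y1 y2 y3 y4 y5 : ℕ×ℕ} (h1 : x ≠ y1) (h2 : x ≠ y2) (h3 : x ≠ y3)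
    (h4 : x ≠ y4) (h5 : x ≠ y5) : x ∉ ({y1,y2,y3,y4,y5} : Finset (ℕ×ℕ)) := by
  simp [h1, h2, h3, h4, h5]

lemma sdd (s t u : Finset ℕ) : (s \ t) \ u = (s \ u) \ t := by
  ext x; simp only [Finset.mem_sdiff]; tauto

lemma commuteRR {N N1 N' : Digraph'} {a b p u c d p' u' : ℕ}
    (c1 : RCtx N a b p u) (c2 : RCtx N c d p' u')
    (hac : a ≠ c) (had : a ≠ d) (hbc : b ≠ c) (hbd : b ≠ d)
    (h1V : N1.V = (N.V.erase d).erase p')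
    (h1A : N1.A = insert (u',c) (((N.A.erase (u',p')).erase (p',c)).erase (p',d)))
    (hV' : N'.V = (N.V.erase b).erase p)
    (hA' : N'.A = insert (u,a) (((N.A.erase (u,p)).erase (p,a)).erase (p,b))) :
    ∃ M : Digraph', ReduceCherry N1 M a b ∧ ReduceCherry N' M c d := by
  -- distinctness
  have hpp' : p ≠ p' := by
    intro h
    rcases c1.childp c (by rw [h]; exact c2.hpa) with h' | h'
    · exact hac h'.symm
    · exact hbc h'.symm
  have hup' : u ≠ p' := by
    intro h
    rcases c2.childp p (by rw [← h]; exact c1.hup) with h' | h'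
    · exact out_ne_zero c1.hpa (h' ▸ c2.la)
    · exact out_ne_zero c1.hpa (h' ▸ c2.lb)
  have hu'p : u' ≠ p := by
    intro h
    rcases c1.childp p' (by rw [← h]; exact c2.hup) with h' | h'
    · exact out_ne_zero c2.hpa (h' ▸ c1.la)
    · exact out_ne_zero c2.hpa (h' ▸ c1.lb)
  have huc : u ≠ c := fun h => out_ne_zero c1.hup (h ▸ c2.la)
  have hud : u ≠ d := fun h => out_ne_zero c1.hup (h ▸ c2.lb)
  have hu'a : u' ≠ a := fun h => out_ne_zero c2.hup (h ▸ c1.la)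
  have hu'b : u' ≠ b := fun h => out_ne_zero c2.hup (h ▸ c1.lb)
  have hpc : p ≠ c := fun h => out_ne_zero c1.hpa (h ▸ c2.la)
  have hpd : p ≠ d := fun h => out_ne_zero c1.hpa (h ▸ c2.lb)
  have hp'a : p' ≠ a := fun h => out_ne_zero c2.hpa (h.symm ▸ c1.la)
  have hap' : a ≠ p' := Ne.symm hp'a
  have hp'b : p' ≠ b := fun h => out_ne_zero c2.hpa (h ▸ c1.lb)
  -- R's data survives in N1
  have hpa1 : ((p,a) : ℕ×ℕ) ∈ N1.A := by
    rw [h1A, mem_ie3]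
    exact Or.inr ⟨pne2 (Ne.symm hp'a), pne1 hpp', pne1 hpp', c1.hpa⟩
  have hpb1 : ((p,b) : ℕ×ℕ) ∈ N1.A := by
    rw [h1A, mem_ie3]
    exact Or.inr ⟨pne2 (Ne.symm hp'b), pne1 hpp', pne1 hpp', c1.hpb⟩
  have hup1 : ((u,p) : ℕ×ℕ) ∈ N1.A := by
    rw [h1A, mem_ie3]
    exact Or.inr ⟨pne2 hpp', pne2 hpc, pne2 hpd, c1.hup⟩
  have la1 : N1.outDeg a = 0 := by
    unfold outDeg
    rw [h1A, fi_neg (show ¬ ((u',c) : ℕ×ℕ).1 = a from hu'a),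
      fe_skip (show ¬ ((p',d) : ℕ×ℕ).1 = a from hp'a),
      fe_skip (show ¬ ((p',c) : ℕ×ℕ).1 = a from hp'a),
      fe_skip (show ¬ ((u',p') : ℕ×ℕ).1 = a from hu'a)]
    exact c1.la
  have lb1 : N1.outDeg b = 0 := by
    unfold outDeg
    rw [h1A, fi_neg (show ¬ ((u',c) : ℕ×ℕ).1 = b from hu'b),
      fe_skip (show ¬ ((p',d) : ℕ×ℕ).1 = b from hp'b),
      fe_skip (show ¬ ((p',c) : ℕ×ℕ).1 = b from hp'b),
      fe_skip (show ¬ ((u',p') : ℕ×ℕ).1 = b from hu'b)]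
    exact c1.lb
  have childp1 : ∀ x, ((p,x) : ℕ×ℕ) ∈ N1.A → x = a ∨ x = b := by
    intro x hx
    rw [h1A, mem_ie3] at hx
    rcases hx with h | ⟨_, _, _, h⟩
    · exact absurd (congrArg Prod.fst h) hu'p.symm
    · exact c1.childp x h
  have parp1 : ∀ x, ((x,p) : ℕ×ℕ) ∈ N1.A → x = u := by
    intro x hx
    rw [h1A, mem_ie3] at hx
    rcases hx with h | ⟨_, _, _, h⟩
    · exact absurd (congrArg Prod.snd h) hpc
    · exact c1.parp x h
  have parb1 : ∀ x, ((x,b) : ℕ×ℕ) ∈ N1.A → x = p := by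
    intro x hx
    rw [h1A, mem_ie3] at hx
    rcases hx with h | ⟨_, _, _, h⟩
    · exact absurd (congrArg Prod.snd h) hbc
    · exact c1.parb x h
  obtain ⟨M, hM, hMV, hMA⟩ := applyRed hpa1 hpb1 hup1 c1.hab la1 lb1 childp1 parp1
    parb1 c1.npa c1.npb c1.nua c1.nub c1.nup
  refine ⟨M, hM, ?_⟩
  -- S's data survives in N'
  have hcV' : c ∈ N'.V := by
    rw [hV', Finset.mem_erase, Finset.mem_erase]
    exact ⟨Ne.symm hpc, Ne.symm hbc, (N.mem_V _ c2.hpa).2⟩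
  have hdV' : d ∈ N'.V := by
    rw [hV', Finset.mem_erase, Finset.mem_erase]
    exact ⟨Ne.symm hpd, Ne.symm hbd, (N.mem_V _ c2.hpb).2⟩
  have lc' : N'.outDeg c = 0 := by
    unfold outDeg
    rw [hA', fi_neg (show ¬ ((u,a) : ℕ×ℕ).1 = c from huc),
      fe_skip (show ¬ ((p,b) : ℕ×ℕ).1 = c from hpc),
      fe_skip (show ¬ ((p,a) : ℕ×ℕ).1 = c from hpc),
      fe_skip (show ¬ ((u,p) : ℕ×ℕ).1 = c from huc)]
    exact c2.la
  have ld' : N'.outDeg d = 0 := by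
    unfold outDeg
    rw [hA', fi_neg (show ¬ ((u,a) : ℕ×ℕ).1 = d from hud),
      fe_skip (show ¬ ((p,b) : ℕ×ℕ).1 = d from hpd),
      fe_skip (show ¬ ((p,a) : ℕ×ℕ).1 = d from hpd),
      fe_skip (show ¬ ((u,p) : ℕ×ℕ).1 = d from hud)]
    exact c2.lb
  have hpc' : ((p',c) : ℕ×ℕ) ∈ N'.A := by
    rw [hA', mem_ie3]
    exact Or.inr ⟨pne2 (Ne.symm hpc), pne1 (Ne.symm hpp'), pne1 (Ne.symm hpp'), c2.hpa⟩
  have hpd' : ((p',d) : ℕ×ℕ) ∈ N'.A := by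
    rw [hA', mem_ie3]
    exact Or.inr ⟨pne2 (Ne.symm hpd), pne1 (Ne.symm hpp'), pne1 (Ne.symm hpp'), c2.hpb⟩
  have hu'p' : ((u',p') : ℕ×ℕ) ∈ N'.A := by
    rw [hA', mem_ie3]
    exact Or.inr ⟨pne2 (Ne.symm hpp'), pne2 hp'a, pne2 hp'b, c2.hup⟩
  refine ⟨⟨c2.hab, ⟨hcV', lc'⟩, ⟨hdV', ld'⟩, p', hpc', hpd'⟩, p', hpc', hpd',
    Or.inr ⟨u', hu'p', ?_, ?_⟩⟩
  · rw [hMV, h1V, ee2, ee2, hV', ee2]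
    exact sdd _ _ _
  · rw [hMA, h1A, ie3, ie3, hA', ie3]
    refine patch_comm ?_ ?_
    · intro e he
      simp only [Finset.mem_singleton] at he
      subst he
      exact not_mem_triple (pne2 (Ne.symm hpc)) (pne2 (Ne.symm hac)) (pne2 (Ne.symm hbc))
    · intro e he
      simp only [Finset.mem_singleton] at he
      subst he
      exact not_mem_triple (pne2 hap') (pne2 hac) (pne2 had)

end Digraph'
namespace Digraph'

lemma RCdist {N : Digraph'} {a b p u c d pc pd uc r : ℕ}
    (c1 : RCtx N a b p u) (c2 : CCtx N c d pc pd uc r) :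
    a ≠ c ∧ a ≠ d ∧ b ≠ c ∧ b ≠ d ∧ p ≠ pc ∧ p ≠ pd ∧ u ≠ pc ∧ u ≠ pd ∧
    uc ≠ p ∧ r ≠ p ∧ uc ≠ a ∧ uc ≠ b ∧ r ≠ a ∧ r ≠ b ∧ pc ≠ a ∧ pc ≠ b ∧
    pd ≠ a ∧ pd ≠ b ∧ u ≠ c ∧ u ≠ d ∧ p ≠ c ∧ p ≠ d := by
  obtain ⟨hac, had, hbc, hbd⟩ := RC_disj c1.toRCtx0 c2
  have hppd : p ≠ pd := by
    intro h
    have t := c2.outpb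
    rw [← h, c1.outp] at t
    omega
  have hppc : p ≠ pc := by
    intro h
    rcases c1.childp pd (by rw [h]; exact c2.h3) with h' | h'
    · exact out_ne_zero c2.h2 (h' ▸ c1.la)
    · exact out_ne_zero c2.h2 (h' ▸ c1.lb)
  have hupc : u ≠ pc := by
    intro h
    rcases c2.childpa p (by rw [← h]; exact c1.hup) with h' | h'
    · exact out_ne_zero c1.hpa (h' ▸ c2.la)
    · exact hppd h'
  have hupd : u ≠ pd := by
    intro h
    have h' := c2.childpb p (by rw [← h]; exact c1.hup)
    exact out_ne_zero c1.hpa (h' ▸ c2.lb)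
  have hucp : uc ≠ p := by
    intro h
    rcases c1.childp pc (by rw [← h]; exact c2.h4) with h' | h'
    · exact out_ne_zero c2.h1 (h' ▸ c1.la)
    · exact out_ne_zero c2.h1 (h' ▸ c1.lb)
  have hrp : r ≠ p := by
    intro h
    rcases c1.childp pd (by rw [← h]; exact c2.h5) with h' | h'
    · exact out_ne_zero c2.h2 (h' ▸ c1.la)
    · exact out_ne_zero c2.h2 (h' ▸ c1.lb)
  exact ⟨hac, had, hbc, hbd, hppc, hppd, hupc, hupd, hucp, hrp,
    fun h => out_ne_zero c2.h4 (h ▸ c1.la), fun h => out_ne_zero c2.h4 (h ▸ c1.lb),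
    fun h => out_ne_zero c2.h5 (h ▸ c1.la), fun h => out_ne_zero c2.h5 (h ▸ c1.lb),
    fun h => out_ne_zero c2.h1 (h ▸ c1.la), fun h => out_ne_zero c2.h1 (h ▸ c1.lb),
    fun h => out_ne_zero c2.h2 (h ▸ c1.la), fun h => out_ne_zero c2.h2 (h ▸ c1.lb),
    fun h => out_ne_zero c1.hup (h ▸ c2.la), fun h => out_ne_zero c1.hup (h ▸ c2.lb),
    fun h => out_ne_zero c1.hpa (h ▸ c2.la), fun h => out_ne_zero c1.hpa (h ▸ c2.lb)⟩

/-- R = reduce cherry (a,b); S = cut ret-cherry (c,d) was applied first. -/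
lemma commuteRC {N N1 N' : Digraph'} {a b p u c d pc pd uc r : ℕ}
    (c1 : RCtx N a b p u) (c2 : CCtx N c d pc pd uc r)
    (h1V : N1.V = (N.V.erase pc).erase pd)
    (h1A : N1.A = insert (uc,c) (insert (r,d)
      (((((N.A.erase (pc,pd)).erase (uc,pc)).erase (pc,c)).erase (r,pd)).erase (pd,d))))
    (hV' : N'.V = (N.V.erase b).erase p)
    (hA' : N'.A = insert (u,a) (((N.A.erase (u,p)).erase (p,a)).erase (p,b))) :
    ∃ M : Digraph', ReduceCherry N1 M a b ∧ CutRetCherry N' M c d := by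
  obtain ⟨hac, had, hbc, hbd, hppc, hppd, hupc, hupd, hucp, hrp, huca, hucb, hra,
    hrb, hpca, hpcb, hpda, hpdb, huc, hud, hpc, hpd⟩ := RCdist c1 c2
  have hpa1 : ((p,a) : ℕ×ℕ) ∈ N1.A := by
    rw [h1A, mem_ie5]
    exact Or.inr (Or.inr ⟨pne2 (Ne.symm hpda), pne2 (Ne.symm hpca), pne1 hppc,
      pne2 (Ne.symm hpda), pne1 hppd, c1.hpa⟩)
  have hpb1 : ((p,b) : ℕ×ℕ) ∈ N1.A := by
    rw [h1A, mem_ie5]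
    exact Or.inr (Or.inr ⟨pne2 (Ne.symm hpdb), pne2 (Ne.symm hpcb), pne1 hppc,
      pne2 (Ne.symm hpdb), pne1 hppd, c1.hpb⟩)
  have hup1 : ((u,p) : ℕ×ℕ) ∈ N1.A := by
    rw [h1A, mem_ie5]
    exact Or.inr (Or.inr ⟨pne2 hppd, pne2 hppc, pne2 hpc, pne2 hppd, pne2 hpd, c1.hup⟩)
  have la1 : N1.outDeg a = 0 := by
    unfold outDeg
    rw [h1A, fi_neg (show ¬ ((uc,c) : ℕ×ℕ).1 = a from huca),
      fi_neg (show ¬ ((r,d) : ℕ×ℕ).1 = a from hra),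
      fe_skip (show ¬ ((pd,d) : ℕ×ℕ).1 = a from hpda),
      fe_skip (show ¬ ((r,pd) : ℕ×ℕ).1 = a from hra),
      fe_skip (show ¬ ((pc,c) : ℕ×ℕ).1 = a from hpca),
      fe_skip (show ¬ ((uc,pc) : ℕ×ℕ).1 = a from huca),
      fe_skip (show ¬ ((pc,pd) : ℕ×ℕ).1 = a from hpca)]
    exact c1.la
  have lb1 : N1.outDeg b = 0 := by
    unfold outDeg
    rw [h1A, fi_neg (show ¬ ((uc,c) : ℕ×ℕ).1 = b from hucb),
      fi_neg (show ¬ ((r,d) : ℕ×ℕ).1 = b from hrb),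
      fe_skip (show ¬ ((pd,d) : ℕ×ℕ).1 = b from hpdb),
      fe_skip (show ¬ ((r,pd) : ℕ×ℕ).1 = b from hrb),
      fe_skip (show ¬ ((pc,c) : ℕ×ℕ).1 = b from hpcb),
      fe_skip (show ¬ ((uc,pc) : ℕ×ℕ).1 = b from hucb),
      fe_skip (show ¬ ((pc,pd) : ℕ×ℕ).1 = b from hpcb)]
    exact c1.lb
  have childp1 : ∀ x, ((p,x) : ℕ×ℕ) ∈ N1.A → x = a ∨ x = b := by
    intro x hx
    rw [h1A, mem_ie5] at hx
    rcases hx with h | h | ⟨_, _, _, _, _, h⟩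
    · exact absurd (congrArg Prod.fst h) (Ne.symm hucp)
    · exact absurd (congrArg Prod.fst h) (Ne.symm hrp)
    · exact c1.childp x h
  have parp1 : ∀ x, ((x,p) : ℕ×ℕ) ∈ N1.A → x = u := by
    intro x hx
    rw [h1A, mem_ie5] at hx
    rcases hx with h | h | ⟨_, _, _, _, _, h⟩
    · exact absurd (congrArg Prod.snd h) hpc
    · exact absurd (congrArg Prod.snd h) hpd
    · exact c1.parp x h
  have parb1 : ∀ x, ((x,b) : ℕ×ℕ) ∈ N1.A → x = p := by
    intro x hx
    rw [h1A, mem_ie5] at hx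
    rcases hx with h | h | ⟨_, _, _, _, _, h⟩
    · exact absurd (congrArg Prod.snd h) hbc
    · exact absurd (congrArg Prod.snd h) hbd
    · exact c1.parb x h
  obtain ⟨M, hM, hMV, hMA⟩ := applyRed hpa1 hpb1 hup1 c1.hab la1 lb1 childp1 parp1
    parb1 c1.npa c1.npb c1.nua c1.nub c1.nup
  refine ⟨M, hM, ?_⟩
  have hcV' : c ∈ N'.V := by
    rw [hV', Finset.mem_erase, Finset.mem_erase]
    exact ⟨Ne.symm hpc, Ne.symm hbc, (N.mem_V _ c2.h1).2⟩
  have hdV' : d ∈ N'.V := by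
    rw [hV', Finset.mem_erase, Finset.mem_erase]
    exact ⟨Ne.symm hpd, Ne.symm hbd, (N.mem_V _ c2.h2).2⟩
  have lc' : N'.outDeg c = 0 := by
    unfold outDeg
    rw [hA', fi_neg (show ¬ ((u,a) : ℕ×ℕ).1 = c from huc),
      fe_skip (show ¬ ((p,b) : ℕ×ℕ).1 = c from hpc),
      fe_skip (show ¬ ((p,a) : ℕ×ℕ).1 = c from hpc),
      fe_skip (show ¬ ((u,p) : ℕ×ℕ).1 = c from huc)]
    exact c2.la
  have ld' : N'.outDeg d = 0 := by
    unfold outDeg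
    rw [hA', fi_neg (show ¬ ((u,a) : ℕ×ℕ).1 = d from hud),
      fe_skip (show ¬ ((p,b) : ℕ×ℕ).1 = d from hpd),
      fe_skip (show ¬ ((p,a) : ℕ×ℕ).1 = d from hpd),
      fe_skip (show ¬ ((u,p) : ℕ×ℕ).1 = d from hud)]
    exact c2.lb
  have hc1' : ((pc,c) : ℕ×ℕ) ∈ N'.A := by
    rw [hA', mem_ie3]
    exact Or.inr ⟨pne2 (Ne.symm hpc), pne1 (Ne.symm hppc), pne1 (Ne.symm hppc), c2.h1⟩
  have hc2' : ((pd,d) : ℕ×ℕ) ∈ N'.A := by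
    rw [hA', mem_ie3]
    exact Or.inr ⟨pne2 (Ne.symm hpd), pne1 (Ne.symm hppd), pne1 (Ne.symm hppd), c2.h2⟩
  have hc3' : ((pc,pd) : ℕ×ℕ) ∈ N'.A := by
    rw [hA', mem_ie3]
    exact Or.inr ⟨pne2 (Ne.symm hppd), pne1 (Ne.symm hppc), pne1 (Ne.symm hppc), c2.h3⟩
  have hc4' : ((uc,pc) : ℕ×ℕ) ∈ N'.A := by
    rw [hA', mem_ie3]
    exact Or.inr ⟨pne2 (Ne.symm hppc), pne2 hpca, pne2 hpcb, c2.h4⟩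
  have hc5' : ((r,pd) : ℕ×ℕ) ∈ N'.A := by
    rw [hA', mem_ie3]
    exact Or.inr ⟨pne2 (Ne.symm hppd), pne2 hpda, pne2 hpdb, c2.h5⟩
  have hin' : N'.inDeg pd = 2 := by
    unfold inDeg
    rw [hA', fi_neg (show ¬ ((u,a) : ℕ×ℕ).2 = pd from Ne.symm hpda),
      fe_skip (show ¬ ((p,b) : ℕ×ℕ).2 = pd from Ne.symm hpdb),
      fe_skip (show ¬ ((p,a) : ℕ×ℕ).2 = pd from Ne.symm hpda),
      fe_skip (show ¬ ((u,p) : ℕ×ℕ).2 = pd from hppd)]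
    exact c2.inpb
  refine ⟨⟨c2.hab, ⟨hcV', lc'⟩, ⟨hdV', ld'⟩, pc, pd, hc1', hc2', hin', hc3'⟩,
    pc, pd, uc, r, hc1', hc2', hin', hc3', hc4', hc5', c2.hqpa, ?_, ?_⟩
  · rw [hMV, h1V, ee2, ee2, hV', ee2]
    exact sdd _ _ _
  · rw [hMA, h1A, hA', ie5, ie5, ie3]
    refine patch_comm ?_ ?_
    · intro e he
      simp only [Finset.mem_insert, Finset.mem_singleton] at he
      rcases he with rfl | rfl
      · exact not_mem_triple (pne2 (Ne.symm hpc)) (pne2 (Ne.symm hac)) (pne2 (Ne.symm hbc))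
      · exact not_mem_triple (pne2 (Ne.symm hpd)) (pne2 (Ne.symm had)) (pne2 (Ne.symm hbd))
    · intro e he
      simp only [Finset.mem_singleton] at he
      subst he
      exact not_mem_five (pne2 (Ne.symm hpda)) (pne2 (Ne.symm hpca)) (pne2 hac)
        (pne2 (Ne.symm hpda)) (pne2 had)

end Digraph'
namespace Digraph'

/-- R = cut (a,b); S = reduce cherry (c,d) was applied first. -/
lemma commuteCR {N N1 N' : Digraph'} {a b pa pb ua q c d p' u' : ℕ}
    (c1 : CCtx N a b pa pb ua q) (cS : RCtx N c d p' u')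
    (h1V : N1.V = (N.V.erase d).erase p')
    (h1A : N1.A = insert (u',c) (((N.A.erase (u',p')).erase (p',c)).erase (p',d)))
    (hV' : N'.V = (N.V.erase pa).erase pb)
    (hA' : N'.A = insert (ua,a) (insert (q,b)
      (((((N.A.erase (pa,pb)).erase (ua,pa)).erase (pa,a)).erase (q,pb)).erase (pb,b)))) :
    ∃ M : Digraph', CutRetCherry N1 M a b ∧ ReduceCherry N' M c d := by
  obtain ⟨hca, hcb, hda, hdb, hp'pa, hp'pb, hu'pa, hu'pb, huap', hqp', huac, huad,
    hqc, hqd, hpac, hpad, hpbc, hpbd, hu'a, hu'b, hp'a, hp'b⟩ := RCdist cS c1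
  -- R's data survives in N1
  have h11 : ((pa,a) : ℕ×ℕ) ∈ N1.A := by
    rw [h1A, mem_ie3]
    exact Or.inr ⟨pne2 (Ne.symm hp'a), pne2 (Ne.symm hca), pne2 (Ne.symm hda), c1.h1⟩
  have h12 : ((pb,b) : ℕ×ℕ) ∈ N1.A := by
    rw [h1A, mem_ie3]
    exact Or.inr ⟨pne2 (Ne.symm hp'b), pne2 (Ne.symm hcb), pne2 (Ne.symm hdb), c1.h2⟩
  have h13 : ((pa,pb) : ℕ×ℕ) ∈ N1.A := by
    rw [h1A, mem_ie3]
    exact Or.inr ⟨pne2 (Ne.symm hp'pb), pne1 (Ne.symm hp'pa), pne1 (Ne.symm hp'pa), c1.h3⟩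
  have h14 : ((ua,pa) : ℕ×ℕ) ∈ N1.A := by
    rw [h1A, mem_ie3]
    exact Or.inr ⟨pne2 (Ne.symm hp'pa), pne2 hpac, pne2 hpad, c1.h4⟩
  have h15 : ((q,pb) : ℕ×ℕ) ∈ N1.A := by
    rw [h1A, mem_ie3]
    exact Or.inr ⟨pne2 (Ne.symm hp'pb), pne2 hpbc, pne2 hpbd, c1.h5⟩
  have hin1 : N1.inDeg pb = 2 := by
    unfold inDeg
    rw [h1A, fi_neg (show ¬ ((u',c) : ℕ×ℕ).2 = pb from Ne.symm hpbc),
      fe_skip (show ¬ ((p',d) : ℕ×ℕ).2 = pb from Ne.symm hpbd),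
      fe_skip (show ¬ ((p',c) : ℕ×ℕ).2 = pb from Ne.symm hpbc),
      fe_skip (show ¬ ((u',p') : ℕ×ℕ).2 = pb from hp'pb)]
    exact c1.inpb
  have la1 : N1.outDeg a = 0 := by
    unfold outDeg
    rw [h1A, fi_neg (show ¬ ((u',c) : ℕ×ℕ).1 = a from hu'a),
      fe_skip (show ¬ ((p',d) : ℕ×ℕ).1 = a from hp'a),
      fe_skip (show ¬ ((p',c) : ℕ×ℕ).1 = a from hp'a),
      fe_skip (show ¬ ((u',p') : ℕ×ℕ).1 = a from hu'a)]
    exact c1.la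
  have lb1 : N1.outDeg b = 0 := by
    unfold outDeg
    rw [h1A, fi_neg (show ¬ ((u',c) : ℕ×ℕ).1 = b from hu'b),
      fe_skip (show ¬ ((p',d) : ℕ×ℕ).1 = b from hp'b),
      fe_skip (show ¬ ((p',c) : ℕ×ℕ).1 = b from hp'b),
      fe_skip (show ¬ ((u',p') : ℕ×ℕ).1 = b from hu'b)]
    exact c1.lb
  have childpa1 : ∀ x, ((pa,x) : ℕ×ℕ) ∈ N1.A → x = a ∨ x = pb := by
    intro x hx
    rw [h1A, mem_ie3] at hx
    rcases hx with h | ⟨_, _, _, h⟩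
    · exact absurd (congrArg Prod.fst h) (Ne.symm hu'pa)
    · exact c1.childpa x h
  have childpb1 : ∀ x, ((pb,x) : ℕ×ℕ) ∈ N1.A → x = b := by
    intro x hx
    rw [h1A, mem_ie3] at hx
    rcases hx with h | ⟨_, _, _, h⟩
    · exact absurd (congrArg Prod.fst h) (Ne.symm hu'pb)
    · exact c1.childpb x h
  have parpa1 : ∀ x, ((x,pa) : ℕ×ℕ) ∈ N1.A → x = ua := by
    intro x hx
    rw [h1A, mem_ie3] at hx
    rcases hx with h | ⟨_, _, _, h⟩
    · exact absurd (congrArg Prod.snd h) hpac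
    · exact c1.parpa x h
  have parpb1 : ∀ x, ((x,pb) : ℕ×ℕ) ∈ N1.A → x = pa ∨ x = q := by
    intro x hx
    rw [h1A, mem_ie3] at hx
    rcases hx with h | ⟨_, _, _, h⟩
    · exact absurd (congrArg Prod.snd h) hpbc
    · exact c1.parpb x h
  obtain ⟨M, hM, hMV, hMA⟩ := applyCut h11 h12 h13 h14 h15 c1.hqpa c1.hab la1 lb1
    hin1 childpa1 childpb1 parpa1 parpb1 c1.dpaa c1.dpab c1.dpba c1.dpbb c1.dpapb
    c1.duaa c1.duab c1.duapa c1.duapb c1.dqa c1.dqb c1.dqpb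
  refine ⟨M, hM, ?_⟩
  -- S's data survives in N'
  have hcV' : c ∈ N'.V := by
    rw [hV', Finset.mem_erase, Finset.mem_erase]
    exact ⟨Ne.symm hpbc, Ne.symm hpac, (N.mem_V _ cS.hpa).2⟩
  have hdV' : d ∈ N'.V := by
    rw [hV', Finset.mem_erase, Finset.mem_erase]
    exact ⟨Ne.symm hpbd, Ne.symm hpad, (N.mem_V _ cS.hpb).2⟩
  have lc' : N'.outDeg c = 0 := by
    unfold outDeg
    rw [hA', fi_neg (show ¬ ((ua,a) : ℕ×ℕ).1 = c from huac),
      fi_neg (show ¬ ((q,b) : ℕ×ℕ).1 = c from hqc),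
      fe_skip (show ¬ ((pb,b) : ℕ×ℕ).1 = c from hpbc),
      fe_skip (show ¬ ((q,pb) : ℕ×ℕ).1 = c from hqc),
      fe_skip (show ¬ ((pa,a) : ℕ×ℕ).1 = c from hpac),
      fe_skip (show ¬ ((ua,pa) : ℕ×ℕ).1 = c from huac),
      fe_skip (show ¬ ((pa,pb) : ℕ×ℕ).1 = c from hpac)]
    exact cS.la
  have ld' : N'.outDeg d = 0 := by
    unfold outDeg
    rw [hA', fi_neg (show ¬ ((ua,a) : ℕ×ℕ).1 = d from huad),
      fi_neg (show ¬ ((q,b) : ℕ×ℕ).1 = d from hqd),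
      fe_skip (show ¬ ((pb,b) : ℕ×ℕ).1 = d from hpbd),
      fe_skip (show ¬ ((q,pb) : ℕ×ℕ).1 = d from hqd),
      fe_skip (show ¬ ((pa,a) : ℕ×ℕ).1 = d from hpad),
      fe_skip (show ¬ ((ua,pa) : ℕ×ℕ).1 = d from huad),
      fe_skip (show ¬ ((pa,pb) : ℕ×ℕ).1 = d from hpad)]
    exact cS.lb
  have hp'c' : ((p',c) : ℕ×ℕ) ∈ N'.A := by
    rw [hA', mem_ie5]
    exact Or.inr (Or.inr ⟨pne2 (Ne.symm hpbc), pne2 (Ne.symm hpac), pne1 hp'pa,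
      pne2 (Ne.symm hpbc), pne2 hcb, cS.hpa⟩)
  have hp'd' : ((p',d) : ℕ×ℕ) ∈ N'.A := by
    rw [hA', mem_ie5]
    exact Or.inr (Or.inr ⟨pne2 (Ne.symm hpbd), pne2 (Ne.symm hpad), pne1 hp'pa,
      pne2 (Ne.symm hpbd), pne2 hdb, cS.hpb⟩)
  have hu'p'' : ((u',p') : ℕ×ℕ) ∈ N'.A := by
    rw [hA', mem_ie5]
    exact Or.inr (Or.inr ⟨pne2 hp'pb, pne2 hp'pa, pne2 hp'a,
      pne2 hp'pb, pne2 hp'b, cS.hup⟩)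
  refine ⟨⟨cS.hab, ⟨hcV', lc'⟩, ⟨hdV', ld'⟩, p', hp'c', hp'd'⟩, p', hp'c', hp'd',
    Or.inr ⟨u', hu'p'', ?_, ?_⟩⟩
  · rw [hMV, h1V, ee2, ee2, hV', ee2]
    exact sdd _ _ _
  · rw [hMA, h1A, hA', ie3, ie3, ie5]
    refine patch_comm ?_ ?_
    · intro e he
      simp only [Finset.mem_singleton] at he
      subst he
      exact not_mem_five (pne2 (Ne.symm hpbc)) (pne2 (Ne.symm hpac)) (pne2 hca)
        (pne2 (Ne.symm hpbc)) (pne2 hcb)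
    · intro e he
      simp only [Finset.mem_insert, Finset.mem_singleton] at he
      rcases he with rfl | rfl
      · exact not_mem_triple (pne2 (Ne.symm hp'a)) (pne2 (Ne.symm hca)) (pne2 (Ne.symm hda))
      · exact not_mem_triple (pne2 (Ne.symm hp'b)) (pne2 (Ne.symm hcb)) (pne2 (Ne.symm hdb))

end Digraph'
namespace Digraph'

lemma CCdist {N : Digraph'} {a b pa pb ua q c d pc pd uc r : ℕ}
    (c1 : CCtx N a b pa pb ua q) (c2 : CCtx N c d pc pd uc r)
    (hac : a ≠ c) (had : a ≠ d) (hbc : b ≠ c) (hbd : b ≠ d) :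
    pa ≠ pc ∧ pa ≠ pd ∧ pb ≠ pc ∧ pb ≠ pd ∧ ua ≠ pc ∧ ua ≠ pd ∧ q ≠ pc ∧ q ≠ pd ∧
    uc ≠ pa ∧ uc ≠ pb ∧ r ≠ pa ∧ r ≠ pb ∧ pa ≠ c ∧ pa ≠ d ∧ pb ≠ c ∧ pb ≠ d ∧
    pc ≠ a ∧ pc ≠ b ∧ pd ≠ a ∧ pd ≠ b ∧ ua ≠ c ∧ ua ≠ d ∧ q ≠ c ∧ q ≠ d ∧
    uc ≠ a ∧ uc ≠ b ∧ r ≠ a ∧ r ≠ b := by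
  have hpbpd : pb ≠ pd := by
    intro h
    exact hbd (by rw [← c1.childpb d (by rw [h]; exact c2.h2)])
  have hpapc : pa ≠ pc := by
    intro h
    rcases c1.childpa c (by rw [h]; exact c2.h1) with h' | h'
    · exact hac h'.symm
    · exact out_ne_zero c1.h2 (h'.symm ▸ c2.la)
  have hpapd : pa ≠ pd := by
    intro h
    have t := c2.outpb
    rw [← h, c1.outpa] at t
    omega
  have hpbpc : pb ≠ pc := by
    intro h
    have t := c2.outpa
    rw [← h, c1.outpb] at t
    omega
  have huapc : ua ≠ pc := by
    intro h
    rcases c2.childpa pa (by rw [← h]; exact c1.h4) with h' | h'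
    · exact out_ne_zero c1.h1 (h' ▸ c2.la)
    · exact hpapd h'
  have huapd : ua ≠ pd := by
    intro h
    exact out_ne_zero c1.h1 ((c2.childpb pa (by rw [← h]; exact c1.h4)) ▸ c2.lb)
  have hqpc : q ≠ pc := by
    intro h
    rcases c2.childpa pb (by rw [← h]; exact c1.h5) with h' | h'
    · exact out_ne_zero c1.h2 (h' ▸ c2.la)
    · exact hpbpd h'
  have hqpd : q ≠ pd := by
    intro h
    exact out_ne_zero c1.h2 ((c2.childpb pb (by rw [← h]; exact c1.h5)) ▸ c2.lb)
  have hucpa : uc ≠ pa := by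
    intro h
    rcases c1.childpa pc (by rw [← h]; exact c2.h4) with h' | h'
    · exact out_ne_zero c2.h1 (h' ▸ c1.la)
    · exact hpbpc h'.symm
  have hucpb : uc ≠ pb := by
    intro h
    exact out_ne_zero c2.h1 ((c1.childpb pc (by rw [← h]; exact c2.h4)) ▸ c1.lb)
  have hrpa : r ≠ pa := by
    intro h
    rcases c1.childpa pd (by rw [← h]; exact c2.h5) with h' | h'
    · exact out_ne_zero c2.h2 (h' ▸ c1.la)
    · exact hpbpd h'.symm
  have hrpb : r ≠ pb := by
    intro h
    exact out_ne_zero c2.h2 ((c1.childpb pd (by rw [← h]; exact c2.h5)) ▸ c1.lb)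
  exact ⟨hpapc, hpapd, hpbpc, hpbpd, huapc, huapd, hqpc, hqpd, hucpa, hucpb,
    hrpa, hrpb,
    fun h => out_ne_zero c1.h1 (h ▸ c2.la), fun h => out_ne_zero c1.h1 (h ▸ c2.lb),
    fun h => out_ne_zero c1.h2 (h ▸ c2.la), fun h => out_ne_zero c1.h2 (h ▸ c2.lb),
    fun h => out_ne_zero c2.h1 (h ▸ c1.la), fun h => out_ne_zero c2.h1 (h ▸ c1.lb),
    fun h => out_ne_zero c2.h2 (h ▸ c1.la), fun h => out_ne_zero c2.h2 (h ▸ c1.lb),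
    fun h => out_ne_zero c1.h4 (h ▸ c2.la), fun h => out_ne_zero c1.h4 (h ▸ c2.lb),
    fun h => out_ne_zero c1.h5 (h ▸ c2.la), fun h => out_ne_zero c1.h5 (h ▸ c2.lb),
    fun h => out_ne_zero c2.h4 (h ▸ c1.la), fun h => out_ne_zero c2.h4 (h ▸ c1.lb),
    fun h => out_ne_zero c2.h5 (h ▸ c1.la), fun h => out_ne_zero c2.h5 (h ▸ c1.lb)⟩

end Digraph'
namespace Digraph'

/-- two disjoint ret-cherry cuts commute -/
lemma commuteCC {N N1 N' : Digraph'} {a b pa pb ua q c d pc pd uc r : ℕ}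
    (c1 : CCtx N a b pa pb ua q) (c2 : CCtx N c d pc pd uc r)
    (hac : a ≠ c) (had : a ≠ d) (hbc : b ≠ c) (hbd : b ≠ d)
    (h1V : N1.V = (N.V.erase pc).erase pd)
    (h1A : N1.A = insert (uc,c) (insert (r,d)
      (((((N.A.erase (pc,pd)).erase (uc,pc)).erase (pc,c)).erase (r,pd)).erase (pd,d))))
    (hV' : N'.V = (N.V.erase pa).erase pb)
    (hA' : N'.A = insert (ua,a) (insert (q,b)
      (((((N.A.erase (pa,pb)).erase (ua,pa)).erase (pa,a)).erase (q,pb)).erase (pb,b)))) :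
    ∃ M : Digraph', CutRetCherry N1 M a b ∧ CutRetCherry N' M c d := by
  obtain ⟨hpapc, hpapd, hpbpc, hpbpd, huapc, huapd, hqpc, hqpd, hucpa, hucpb,
    hrpa, hrpb, hpac, hpad, hpbc, hpbd, hpca, hpcb, hpda, hpdb, huac, huad,
    hqc, hqd, huca, hucb, hra, hrb⟩ := CCdist c1 c2 hac had hbc hbd
  -- R's data survives in N1
  have h11 : ((pa,a) : ℕ×ℕ) ∈ N1.A := by
    rw [h1A, mem_ie5]
    exact Or.inr (Or.inr ⟨pne2 (Ne.symm hpda), pne2 (Ne.symm hpca), pne1 hpapc,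
      pne2 (Ne.symm hpda), pne1 hpapd, c1.h1⟩)
  have h12 : ((pb,b) : ℕ×ℕ) ∈ N1.A := by
    rw [h1A, mem_ie5]
    exact Or.inr (Or.inr ⟨pne2 (Ne.symm hpdb), pne2 (Ne.symm hpcb), pne1 hpbpc,
      pne2 (Ne.symm hpdb), pne1 hpbpd, c1.h2⟩)
  have h13 : ((pa,pb) : ℕ×ℕ) ∈ N1.A := by
    rw [h1A, mem_ie5]
    exact Or.inr (Or.inr ⟨pne2 hpbpd, pne2 hpbpc, pne1 hpapc, pne2 hpbpd,
      pne2 hpbd, c1.h3⟩)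
  have h14 : ((ua,pa) : ℕ×ℕ) ∈ N1.A := by
    rw [h1A, mem_ie5]
    exact Or.inr (Or.inr ⟨pne2 hpapd, pne2 hpapc, pne2 hpac, pne2 hpapd,
      pne2 hpad, c1.h4⟩)
  have h15 : ((q,pb) : ℕ×ℕ) ∈ N1.A := by
    rw [h1A, mem_ie5]
    exact Or.inr (Or.inr ⟨pne2 hpbpd, pne2 hpbpc, pne2 hpbc, pne2 hpbpd,
      pne2 hpbd, c1.h5⟩)
  have hin1 : N1.inDeg pb = 2 := by
    unfold inDeg
    rw [h1A, fi_neg (show ¬ ((uc,c) : ℕ×ℕ).2 = pb from Ne.symm hpbc),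
      fi_neg (show ¬ ((r,d) : ℕ×ℕ).2 = pb from Ne.symm hpbd),
      fe_skip (show ¬ ((pd,d) : ℕ×ℕ).2 = pb from Ne.symm hpbd),
      fe_skip (show ¬ ((r,pd) : ℕ×ℕ).2 = pb from Ne.symm hpbpd),
      fe_skip (show ¬ ((pc,c) : ℕ×ℕ).2 = pb from Ne.symm hpbc),
      fe_skip (show ¬ ((uc,pc) : ℕ×ℕ).2 = pb from Ne.symm hpbpc),
      fe_skip (show ¬ ((pc,pd) : ℕ×ℕ).2 = pb from Ne.symm hpbpd)]
    exact c1.inpb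
  have la1 : N1.outDeg a = 0 := by
    unfold outDeg
    rw [h1A, fi_neg (show ¬ ((uc,c) : ℕ×ℕ).1 = a from huca),
      fi_neg (show ¬ ((r,d) : ℕ×ℕ).1 = a from hra),
      fe_skip (show ¬ ((pd,d) : ℕ×ℕ).1 = a from hpda),
      fe_skip (show ¬ ((r,pd) : ℕ×ℕ).1 = a from hra),
      fe_skip (show ¬ ((pc,c) : ℕ×ℕ).1 = a from hpca),
      fe_skip (show ¬ ((uc,pc) : ℕ×ℕ).1 = a from huca),
      fe_skip (show ¬ ((pc,pd) : ℕ×ℕ).1 = a from hpca)]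
    exact c1.la
  have lb1 : N1.outDeg b = 0 := by
    unfold outDeg
    rw [h1A, fi_neg (show ¬ ((uc,c) : ℕ×ℕ).1 = b from hucb),
      fi_neg (show ¬ ((r,d) : ℕ×ℕ).1 = b from hrb),
      fe_skip (show ¬ ((pd,d) : ℕ×ℕ).1 = b from hpdb),
      fe_skip (show ¬ ((r,pd) : ℕ×ℕ).1 = b from hrb),
      fe_skip (show ¬ ((pc,c) : ℕ×ℕ).1 = b from hpcb),
      fe_skip (show ¬ ((uc,pc) : ℕ×ℕ).1 = b from hucb),
      fe_skip (show ¬ ((pc,pd) : ℕ×ℕ).1 = b from hpcb)]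
    exact c1.lb
  have childpa1 : ∀ x, ((pa,x) : ℕ×ℕ) ∈ N1.A → x = a ∨ x = pb := by
    intro x hx
    rw [h1A, mem_ie5] at hx
    rcases hx with h | h | ⟨_, _, _, _, _, h⟩
    · exact absurd (congrArg Prod.fst h) (Ne.symm hucpa)
    · exact absurd (congrArg Prod.fst h) (Ne.symm hrpa)
    · exact c1.childpa x h
  have childpb1 : ∀ x, ((pb,x) : ℕ×ℕ) ∈ N1.A → x = b := by
    intro x hx
    rw [h1A, mem_ie5] at hx
    rcases hx with h | h | ⟨_, _, _, _, _, h⟩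
    · exact absurd (congrArg Prod.fst h) (Ne.symm hucpb)
    · exact absurd (congrArg Prod.fst h) (Ne.symm hrpb)
    · exact c1.childpb x h
  have parpa1 : ∀ x, ((x,pa) : ℕ×ℕ) ∈ N1.A → x = ua := by
    intro x hx
    rw [h1A, mem_ie5] at hx
    rcases hx with h | h | ⟨_, _, _, _, _, h⟩
    · exact absurd (congrArg Prod.snd h) hpac
    · exact absurd (congrArg Prod.snd h) hpad
    · exact c1.parpa x h
  have parpb1 : ∀ x, ((x,pb) : ℕ×ℕ) ∈ N1.A → x = pa ∨ x = q := by
    intro x hx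
    rw [h1A, mem_ie5] at hx
    rcases hx with h | h | ⟨_, _, _, _, _, h⟩
    · exact absurd (congrArg Prod.snd h) hpbc
    · exact absurd (congrArg Prod.snd h) hpbd
    · exact c1.parpb x h
  obtain ⟨M, hM, hMV, hMA⟩ := applyCut h11 h12 h13 h14 h15 c1.hqpa c1.hab la1 lb1
    hin1 childpa1 childpb1 parpa1 parpb1 c1.dpaa c1.dpab c1.dpba c1.dpbb c1.dpapb
    c1.duaa c1.duab c1.duapa c1.duapb c1.dqa c1.dqb c1.dqpb
  refine ⟨M, hM, ?_⟩
  -- S's data survives in N'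
  have hcV' : c ∈ N'.V := by
    rw [hV', Finset.mem_erase, Finset.mem_erase]
    exact ⟨Ne.symm hpbc, Ne.symm hpac, (N.mem_V _ c2.h1).2⟩
  have hdV' : d ∈ N'.V := by
    rw [hV', Finset.mem_erase, Finset.mem_erase]
    exact ⟨Ne.symm hpbd, Ne.symm hpad, (N.mem_V _ c2.h2).2⟩
  have lc' : N'.outDeg c = 0 := by
    unfold outDeg
    rw [hA', fi_neg (show ¬ ((ua,a) : ℕ×ℕ).1 = c from huac),
      fi_neg (show ¬ ((q,b) : ℕ×ℕ).1 = c from hqc),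
      fe_skip (show ¬ ((pb,b) : ℕ×ℕ).1 = c from hpbc),
      fe_skip (show ¬ ((q,pb) : ℕ×ℕ).1 = c from hqc),
      fe_skip (show ¬ ((pa,a) : ℕ×ℕ).1 = c from hpac),
      fe_skip (show ¬ ((ua,pa) : ℕ×ℕ).1 = c from huac),
      fe_skip (show ¬ ((pa,pb) : ℕ×ℕ).1 = c from hpac)]
    exact c2.la
  have ld' : N'.outDeg d = 0 := by
    unfold outDeg
    rw [hA', fi_neg (show ¬ ((ua,a) : ℕ×ℕ).1 = d from huad),
      fi_neg (show ¬ ((q,b) : ℕ×ℕ).1 = d from hqd),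
      fe_skip (show ¬ ((pb,b) : ℕ×ℕ).1 = d from hpbd),
      fe_skip (show ¬ ((q,pb) : ℕ×ℕ).1 = d from hqd),
      fe_skip (show ¬ ((pa,a) : ℕ×ℕ).1 = d from hpad),
      fe_skip (show ¬ ((ua,pa) : ℕ×ℕ).1 = d from huad),
      fe_skip (show ¬ ((pa,pb) : ℕ×ℕ).1 = d from hpad)]
    exact c2.lb
  have s1 : ((pc,c) : ℕ×ℕ) ∈ N'.A := by
    rw [hA', mem_ie5]
    exact Or.inr (Or.inr ⟨pne2 (Ne.symm hpbc), pne2 (Ne.symm hpac), pne1 (Ne.symm hpapc),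
      pne2 (Ne.symm hpbc), pne1 (Ne.symm hpbpc), c2.h1⟩)
  have s2 : ((pd,d) : ℕ×ℕ) ∈ N'.A := by
    rw [hA', mem_ie5]
    exact Or.inr (Or.inr ⟨pne2 (Ne.symm hpbd), pne2 (Ne.symm hpad), pne1 (Ne.symm hpapd),
      pne2 (Ne.symm hpbd), pne1 (Ne.symm hpbpd), c2.h2⟩)
  have s3 : ((pc,pd) : ℕ×ℕ) ∈ N'.A := by
    rw [hA', mem_ie5]
    exact Or.inr (Or.inr ⟨pne2 (Ne.symm hpbpd), pne2 (Ne.symm hpapd), pne1 (Ne.symm hpapc),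
      pne2 (Ne.symm hpbpd), pne2 hpdb, c2.h3⟩)
  have s4 : ((uc,pc) : ℕ×ℕ) ∈ N'.A := by
    rw [hA', mem_ie5]
    exact Or.inr (Or.inr ⟨pne2 (Ne.symm hpbpc), pne2 (Ne.symm hpapc), pne2 hpca,
      pne2 (Ne.symm hpbpc), pne2 hpcb, c2.h4⟩)
  have s5 : ((r,pd) : ℕ×ℕ) ∈ N'.A := by
    rw [hA', mem_ie5]
    exact Or.inr (Or.inr ⟨pne2 (Ne.symm hpbpd), pne2 (Ne.symm hpapd), pne2 hpda,
      pne2 (Ne.symm hpbpd), pne2 hpdb, c2.h5⟩)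
  have hin' : N'.inDeg pd = 2 := by
    unfold inDeg
    rw [hA', fi_neg (show ¬ ((ua,a) : ℕ×ℕ).2 = pd from Ne.symm hpda),
      fi_neg (show ¬ ((q,b) : ℕ×ℕ).2 = pd from Ne.symm hpdb),
      fe_skip (show ¬ ((pb,b) : ℕ×ℕ).2 = pd from Ne.symm hpdb),
      fe_skip (show ¬ ((q,pb) : ℕ×ℕ).2 = pd from hpbpd),
      fe_skip (show ¬ ((pa,a) : ℕ×ℕ).2 = pd from Ne.symm hpda),
      fe_skip (show ¬ ((ua,pa) : ℕ×ℕ).2 = pd from hpapd),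
      fe_skip (show ¬ ((pa,pb) : ℕ×ℕ).2 = pd from hpbpd)]
    exact c2.inpb
  refine ⟨⟨c2.hab, ⟨hcV', lc'⟩, ⟨hdV', ld'⟩, pc, pd, s1, s2, hin', s3⟩,
    pc, pd, uc, r, s1, s2, hin', s3, s4, s5, c2.hqpa, ?_, ?_⟩
  · rw [hMV, h1V, ee2, ee2, hV', ee2]
    exact sdd _ _ _
  · rw [hMA, h1A, hA', ie5, ie5, ie5]
    refine patch_comm ?_ ?_
    · intro e he
      simp only [Finset.mem_insert, Finset.mem_singleton] at he
      rcases he with rfl | rfl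
      · exact not_mem_five (pne2 (Ne.symm hpbc)) (pne2 (Ne.symm hpac)) (pne2 (Ne.symm hac))
          (pne2 (Ne.symm hpbc)) (pne2 (Ne.symm hbc))
      · exact not_mem_five (pne2 (Ne.symm hpbd)) (pne2 (Ne.symm hpad)) (pne2 (Ne.symm had))
          (pne2 (Ne.symm hpbd)) (pne2 (Ne.symm hbd))
    · intro e he
      simp only [Finset.mem_insert, Finset.mem_singleton] at he
      rcases he with rfl | rfl
      · exact not_mem_five (pne2 (Ne.symm hpda)) (pne2 (Ne.symm hpca)) (pne2 hac)
          (pne2 (Ne.symm hpda)) (pne2 had)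
      · exact not_mem_five (pne2 (Ne.symm hpdb)) (pne2 (Ne.symm hpcb)) (pne2 hbc)
          (pne2 (Ne.symm hpdb)) (pne2 hbd)

end Digraph'
namespace Digraph'

/-- the special overlap: two ret-cherry cuts sharing the reticulation leaf b.
S cut (c,b) (with parent chain uc → q, and second parent pa of pb);
R cuts (a,b). After S, {a,b} is a plain cherry; after R, {c,b} is. -/
lemma convergeCC {N N1 N' : Digraph'} {a b pa pb ua q c uc : ℕ}
    (c1 : CCtx N a b pa pb ua q) (c2 : CCtx N c b q pb uc pa) (hac : a ≠ c)
    (h1V : N1.V = (N.V.erase q).erase pb)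
    (h1A : N1.A = insert (uc,c) (insert (pa,b)
      (((((N.A.erase (q,pb)).erase (uc,q)).erase (q,c)).erase (pa,pb)).erase (pb,b))))
    (hV' : N'.V = (N.V.erase pa).erase pb)
    (hA' : N'.A = insert (ua,a) (insert (q,b)
      (((((N.A.erase (pa,pb)).erase (ua,pa)).erase (pa,a)).erase (q,pb)).erase (pb,b)))) :
    ∃ M : Digraph', ReduceCherry N1 M a b ∧ ReduceCherry N' M c b := by
  have hpac : pa ≠ c := c2.dqa
  have hucpa : uc ≠ pa := by
    intro h
    rcases c1.childpa q (by rw [← h]; exact c2.h4) with h' | h'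
    · exact c1.dqa (h'.symm ▸ rfl : q = a) |>.elim
    · exact c1.dqpb h'
  have hucna : uc ≠ a := fun h => out_ne_zero c2.h4 (h ▸ c1.la)
  have hucnb : uc ≠ b := c2.duab
  have huanc : ua ≠ c := fun h => out_ne_zero c1.h4 (h ▸ c2.la)
  -- reduce cherry (a,b) in N1, parent pa, grandparent ua
  have hpa1 : ((pa,a) : ℕ×ℕ) ∈ N1.A := by
    rw [h1A, mem_ie5]
    exact Or.inr (Or.inr ⟨pne1 (Ne.symm c1.hqpa), pne2 (Ne.symm c1.dqa),
      pne1 (Ne.symm c1.hqpa), pne2 (Ne.symm c1.dpba), pne1 c1.dpapb, c1.h1⟩)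
  have hpb1 : ((pa,b) : ℕ×ℕ) ∈ N1.A := by
    rw [h1A]
    exact Finset.mem_insert.2 (Or.inr (Finset.mem_insert_self _ _))
  have hup1 : ((ua,pa) : ℕ×ℕ) ∈ N1.A := by
    rw [h1A, mem_ie5]
    exact Or.inr (Or.inr ⟨pne2 c1.dpapb, pne2 (Ne.symm c1.hqpa), pne2 hpac,
      pne2 c1.dpapb, pne2 c1.dpab, c1.h4⟩)
  have la1 : N1.outDeg a = 0 := by
    unfold outDeg
    rw [h1A, fi_neg (show ¬ ((uc,c) : ℕ×ℕ).1 = a from hucna),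
      fi_neg (show ¬ ((pa,b) : ℕ×ℕ).1 = a from c1.dpaa),
      fe_skip (show ¬ ((pb,b) : ℕ×ℕ).1 = a from c1.dpba),
      fe_skip (show ¬ ((pa,pb) : ℕ×ℕ).1 = a from c1.dpaa),
      fe_skip (show ¬ ((q,c) : ℕ×ℕ).1 = a from c1.dqa),
      fe_skip (show ¬ ((uc,q) : ℕ×ℕ).1 = a from hucna),
      fe_skip (show ¬ ((q,pb) : ℕ×ℕ).1 = a from c1.dqa)]
    exact c1.la
  have lb1 : N1.outDeg b = 0 := by
    unfold outDeg
    rw [h1A, fi_neg (show ¬ ((uc,c) : ℕ×ℕ).1 = b from hucnb),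
      fi_neg (show ¬ ((pa,b) : ℕ×ℕ).1 = b from c1.dpab),
      fe_skip (show ¬ ((pb,b) : ℕ×ℕ).1 = b from c1.dpbb),
      fe_skip (show ¬ ((pa,pb) : ℕ×ℕ).1 = b from c1.dpab),
      fe_skip (show ¬ ((q,c) : ℕ×ℕ).1 = b from c1.dqb),
      fe_skip (show ¬ ((uc,q) : ℕ×ℕ).1 = b from hucnb),
      fe_skip (show ¬ ((q,pb) : ℕ×ℕ).1 = b from c1.dqb)]
    exact c1.lb
  have childp1 : ∀ x, ((pa,x) : ℕ×ℕ) ∈ N1.A → x = a ∨ x = b := by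
    intro x hx
    rw [h1A, mem_ie5] at hx
    rcases hx with h | h | ⟨_, _, _, h4, _, h⟩
    · exact absurd (congrArg Prod.fst h) (Ne.symm hucpa)
    · exact Or.inr (congrArg Prod.snd h)
    · rcases c1.childpa x h with h' | h'
      · exact Or.inl h'
      · exact absurd (by rw [h']) h4
  have parp1 : ∀ x, ((x,pa) : ℕ×ℕ) ∈ N1.A → x = ua := by
    intro x hx
    rw [h1A, mem_ie5] at hx
    rcases hx with h | h | ⟨_, _, _, _, _, h⟩
    · exact absurd (congrArg Prod.snd h) hpac
    · exact absurd (congrArg Prod.snd h) c1.dpab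
    · exact c1.parpa x h
  have parb1 : ∀ x, ((x,b) : ℕ×ℕ) ∈ N1.A → x = pa := by
    intro x hx
    rw [h1A, mem_ie5] at hx
    rcases hx with h | h | ⟨_, _, _, _, h5, h⟩
    · exact absurd (congrArg Prod.snd h) (Ne.symm c2.hab)
    · exact congrArg Prod.fst h
    · exact absurd (by rw [c1.parb x h]) h5
  obtain ⟨M, hM, hMV, hMA⟩ := applyRed hpa1 hpb1 hup1 c1.hab la1 lb1 childp1 parp1
    parb1 c1.dpaa c1.dpab c1.duaa c1.duab c1.duapa
  refine ⟨M, hM, ?_⟩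
  -- reduce cherry (c,b) in N', parent q, grandparent uc
  have hqc' : ((q,c) : ℕ×ℕ) ∈ N'.A := by
    rw [hA', mem_ie5]
    exact Or.inr (Or.inr ⟨pne2 (Ne.symm c2.dpba), pne2 (Ne.symm hpac),
      pne1 c1.hqpa, pne2 (Ne.symm c2.dpba), pne1 c1.dqpb, c2.h1⟩)
  have hqb' : ((q,b) : ℕ×ℕ) ∈ N'.A := by
    rw [hA']
    exact Finset.mem_insert.2 (Or.inr (Finset.mem_insert_self _ _))
  have hucq' : ((uc,q) : ℕ×ℕ) ∈ N'.A := by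
    rw [hA', mem_ie5]
    exact Or.inr (Or.inr ⟨pne2 c1.dqpb, pne2 c1.hqpa, pne2 c1.dqa,
      pne2 c1.dqpb, pne2 c1.dqb, c2.h4⟩)
  have hcV' : c ∈ N'.V := by
    rw [hV', Finset.mem_erase, Finset.mem_erase]
    exact ⟨Ne.symm c2.dpba, Ne.symm hpac, (N.mem_V _ c2.h1).2⟩
  have hbV' : b ∈ N'.V := by
    rw [hV', Finset.mem_erase, Finset.mem_erase]
    exact ⟨Ne.symm c1.dpbb, Ne.symm c1.dpab, (N.mem_V _ c1.h2).2⟩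
  have lc' : N'.outDeg c = 0 := by
    unfold outDeg
    rw [hA', fi_neg (show ¬ ((ua,a) : ℕ×ℕ).1 = c from huanc),
      fi_neg (show ¬ ((q,b) : ℕ×ℕ).1 = c from c2.dpaa),
      fe_skip (show ¬ ((pb,b) : ℕ×ℕ).1 = c from c2.dpba),
      fe_skip (show ¬ ((q,pb) : ℕ×ℕ).1 = c from c2.dpaa),
      fe_skip (show ¬ ((pa,a) : ℕ×ℕ).1 = c from hpac),
      fe_skip (show ¬ ((ua,pa) : ℕ×ℕ).1 = c from huanc),
      fe_skip (show ¬ ((pa,pb) : ℕ×ℕ).1 = c from hpac)]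
    exact c2.la
  have lb' : N'.outDeg b = 0 := by
    unfold outDeg
    rw [hA', fi_neg (show ¬ ((ua,a) : ℕ×ℕ).1 = b from c1.duab),
      fi_neg (show ¬ ((q,b) : ℕ×ℕ).1 = b from c1.dqb),
      fe_skip (show ¬ ((pb,b) : ℕ×ℕ).1 = b from c1.dpbb),
      fe_skip (show ¬ ((q,pb) : ℕ×ℕ).1 = b from c1.dqb),
      fe_skip (show ¬ ((pa,a) : ℕ×ℕ).1 = b from c1.dpab),
      fe_skip (show ¬ ((ua,pa) : ℕ×ℕ).1 = b from c1.duab),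
      fe_skip (show ¬ ((pa,pb) : ℕ×ℕ).1 = b from c1.dpab)]
    exact c1.lb
  refine ⟨⟨c2.hab, ⟨hcV', lc'⟩, ⟨hbV', lb'⟩, q, hqc', hqb'⟩, q, hqc', hqb',
    Or.inr ⟨uc, hucq', ?_, ?_⟩⟩
  · rw [hMV, h1V, ee2, ee2, hV', ee2]
    ext x
    simp only [Finset.mem_sdiff, Finset.mem_insert, Finset.mem_singleton]
    tauto
  · rw [hMA, h1A, hA', ie5, ie5, ie3, patch_assoc, patch_assoc]
    have hqbA : ((q,b) : ℕ×ℕ) ∉ N.A := c1.nqbA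
    have hpabA : ((pa,b) : ℕ×ℕ) ∉ N.A := c2.nqbA
    have eqI1 : ({(uc,c),(pa,b)} : Finset (ℕ×ℕ)) \ {(ua,pa),(pa,a),(pa,b)}
        = {(uc,c)} := by
      ext e
      simp only [Finset.mem_sdiff, Finset.mem_insert, Finset.mem_singleton]
      constructor
      · rintro ⟨rfl | rfl, hne⟩
        · rfl
        · exact absurd (Or.inr (Or.inr rfl)) hne
      · rintro rfl
        refine ⟨Or.inl rfl, ?_⟩
        rintro (h | h | h)
        · exact pne2 (Ne.symm hpac) h
        · exact pne2 (Ne.symm hac) h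
        · exact pne2 c2.hab h
    have eqI2 : ({(ua,a),(q,b)} : Finset (ℕ×ℕ)) \ {(uc,q),(q,c),(q,b)}
        = {(ua,a)} := by
      ext e
      simp only [Finset.mem_sdiff, Finset.mem_insert, Finset.mem_singleton]
      constructor
      · rintro ⟨rfl | rfl, hne⟩
        · rfl
        · exact absurd (Or.inr (Or.inr rfl)) hne
      · rintro rfl
        refine ⟨Or.inl rfl, ?_⟩
        rintro (h | h | h)
        · exact pne2 (Ne.symm c1.dqa) h
        · exact pne2 hac h
        · exact pne2 c1.hab h
    have eqD : N.A \ (({(q,pb),(uc,q),(q,c),(pa,pb),(pb,b)} : Finset (ℕ×ℕ))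
          ∪ {(ua,pa),(pa,a),(pa,b)})
        = N.A \ (({(pa,pb),(ua,pa),(pa,a),(q,pb),(pb,b)} : Finset (ℕ×ℕ))
          ∪ {(uc,q),(q,c),(q,b)}) := by
      ext e
      simp only [Finset.mem_sdiff, Finset.mem_union, Finset.mem_insert,
        Finset.mem_singleton]
      by_cases heA : e ∈ N.A
      · have h1 : e ≠ (q,b) := fun h => hqbA (h ▸ heA)
        have h2 : e ≠ (pa,b) := fun h => hpabA (h ▸ heA)
        simp only [heA, true_and]
        constructor
        · intro hne
          push_neg at hne ⊢
          tauto
        · intro hne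
          push_neg at hne ⊢
          tauto
      · simp [heA]
    rw [eqI1, eqI2, eqD, Finset.union_comm ({(uc,c)} : Finset (ℕ×ℕ)) {(ua,a)}]

end Digraph'
namespace Digraph'

lemma main_lemma {F : Digraph'} (hF : IsSingle F) :
    ∀ {N : Digraph'}, Relation.ReflTransGen CherryStep N F → GoodDeg N →
    ∀ N' a b, (ReduceCherry N N' a b ∨ CutRetCherry N N' a b) → IsOrchard N' := by
  intro N chain
  induction chain using Relation.ReflTransGen.head_induction_on with
  | refl =>
    intro _ N' a b hred
    obtain ⟨x, hV, hA⟩ := hF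
    exfalso
    rcases hred with ⟨_, p, hpa, _⟩ | ⟨_, pa, pb, _, _, hpa, _⟩ <;>
      · rw [hA] at hpa
        simp at hpa
  | @head N N1 hstep htl ih =>
    intro hg N' a b hred
    have horchN1 : IsOrchard N1 := ⟨F, htl, hF⟩
    obtain ⟨c, d, hS⟩ := hstep
    rcases hred with ⟨hch, p, hpa, hpb, hbr⟩ | ⟨hrc, pa, pb, ua, q, h1, h2, hinpb, h3, h4, h5, hqpa, hV', hA'⟩
    · -- R = reduce cherry (a,b)
      rcases hbr with ⟨hroot, hVs, hAs⟩ | ⟨u, hup, hV', hA'⟩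
      · exact orch_single ⟨a, hVs, hAs⟩
      · have c1 : RCtx N a b p u := mkRCtx hg hch.1 hch.2.1.2 hch.2.2.1.2 hpa hpb hup
        rcases hS with ⟨hchS, p', hpc, hpd, hbrS⟩ | ⟨hrcS, pc, pd, uc, r, s1, s2, sin, s3, s4, s5, sq, h1V, h1A⟩
        · rcases hbrS with ⟨hrootS, h1Vs, h1As⟩ | ⟨u', hupS, h1V, h1A⟩
          · -- S reduces a cherry at the root
            have c2 : RCtx0 N c d p' := mkRCtx0 hg hchS.1 hchS.2.1.2 hchS.2.2.1.2 hpc hpd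
            rcases RR_cases c1.toRCtx0 c2 with ⟨_, _, hpp⟩ | ⟨_, _, hpp⟩ | hdisj
            · exact absurd hrootS (by rw [← hpp]; exact in_ne_zero c1.hup)
            · exact absurd hrootS (by rw [← hpp]; exact in_ne_zero c1.hup)
            · exact rootRed c1 c2 hrootS hdisj hV' hA'
          · -- S reduces a cherry, non-root
            have c2 : RCtx N c d p' u' := mkRCtx hg hchS.1 hchS.2.1.2 hchS.2.2.1.2 hpc hpd hupS
            rcases RR_cases c1.toRCtx0 c2.toRCtx0 with ⟨rfl, rfl, rfl⟩ | ⟨rfl, rfl, rfl⟩ | ⟨hac, had, hbc, hbd⟩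
            · -- identical
              obtain rfl : u' = u := c1.parp u' hupS
              rw [show N' = N1 from ext' (hV'.trans h1V.symm) (hA'.trans h1A.symm)]
              exact horchN1
            · -- swap
              obtain rfl : u' = u := c1.parp u' hupS
              exact swap_case c1 h1V h1A hV' hA' horchN1
            · -- disjoint: commute
              obtain ⟨M, hM1, hM2⟩ := commuteRR c1 c2 hac had hbc hbd h1V h1A hV' hA'
              have good1 : GoodDeg N1 := goodRed hg c2 h1V h1A
              exact orch_step ⟨c, d, Or.inl hM2⟩ (ih good1 M a b (Or.inl hM1))
        · -- S cuts a ret-cherry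
          have c2 : CCtx N c d pc pd uc r :=
            mkCCtx hg hrcS.1 hrcS.2.1.2 hrcS.2.2.1.2 s1 s2 s3 s4 s5 sin sq
          obtain ⟨M, hM1, hM2⟩ := commuteRC c1 c2 h1V h1A hV' hA'
          have good1 : GoodDeg N1 := goodCut hg c2 h1V h1A
          exact orch_step ⟨c, d, Or.inr hM2⟩ (ih good1 M a b (Or.inl hM1))
    · -- R = cut ret-cherry (a,b)
      have c1 : CCtx N a b pa pb ua q :=
        mkCCtx hg hrc.1 hrc.2.1.2 hrc.2.2.1.2 h1 h2 h3 h4 h5 hinpb hqpa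
      rcases hS with ⟨hchS, p', hpc, hpd, hbrS⟩ | ⟨hrcS, pc, pd, uc, r, s1, s2, sin, s3, s4, s5, sq, h1V, h1A⟩
      · rcases hbrS with ⟨hrootS, h1Vs, h1As⟩ | ⟨u', hupS, h1V, h1A⟩
        · -- S reduces a root cherry
          have c2 : RCtx0 N c d p' := mkRCtx0 hg hchS.1 hchS.2.1.2 hchS.2.2.1.2 hpc hpd
          exact rootCut c1 c2 hrootS hV' hA'
        · -- S reduces a cherry, non-root
          have c2 : RCtx N c d p' u' := mkRCtx hg hchS.1 hchS.2.1.2 hchS.2.2.1.2 hpc hpd hupS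
          obtain ⟨M, hM1, hM2⟩ := commuteCR c1 c2 h1V h1A hV' hA'
          have good1 : GoodDeg N1 := goodRed hg c2 h1V h1A
          exact orch_step ⟨c, d, Or.inl hM2⟩ (ih good1 M a b (Or.inr hM1))
      · -- S cuts a ret-cherry
        have c2 : CCtx N c d pc pd uc r :=
          mkCCtx hg hrcS.1 hrcS.2.1.2 hrcS.2.2.1.2 s1 s2 s3 s4 s5 sin sq
        rcases CC_cases c1 c2 with ⟨rfl, rfl, rfl, rfl, rfl, rfl⟩ |
          ⟨hac, rfl, rfl, rfl, rfl⟩ | ⟨hac, had, hbc, hbd⟩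
        · -- identical
          rw [show N' = N1 from ext' (hV'.trans h1V.symm) (hA'.trans h1A.symm)]
          exact horchN1
        · -- shared reticulation leaf b = d
          obtain ⟨M, hM1, hM2⟩ := convergeCC c1 c2 hac h1V h1A hV' hA'
          have good1 : GoodDeg N1 := goodCut hg c2 h1V h1A
          exact orch_step ⟨c, b, Or.inl hM2⟩ (ih good1 M a b (Or.inl hM1))
        · -- disjoint: commute
          obtain ⟨M, hM1, hM2⟩ := commuteCC c1 c2 hac had hbc hbd h1V h1A hV' hA'
          have good1 : GoodDeg N1 := goodCut hg c2 h1V h1A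
          exact orch_step ⟨c, d, Or.inr hM2⟩ (ih good1 M a b (Or.inr hM1))

end Digraph'

open Digraph'

/-- applying a cherry reduction (reducing a cherry leaf or cutting a
reticulated cherry) to an orchard network yields an orchard network. -/
theorem stmt_12 (N N' : Digraph') (X : Finset ℕ) (a b : ℕ)
    (hnet : N.IsPhylo X ∨ IsSingle N)
    (horch : N.IsOrchard)
    (hred : ReduceCherry N N' a b ∨ CutRetCherry N N' a b) :
    N'.IsOrchard := by
  obtain ⟨F, chain, hFs⟩ := horch
  have hg : GoodDeg N := by
    rcases hnet with hp | ⟨x, hV, hA⟩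
    · exact hp.degrees
    · exfalso
      rcases hred with ⟨_, p, hpa, _⟩ | ⟨_, pa, pb, _, _, hpa, _⟩ <;>
        · rw [hA] at hpa
          simp at hpa
  exact main_lemma hFs chain hg N' a b hred
end

section
/- Let N be a phylogenetic network on X with |X| ≥ 2 and suppose {a, b} is a reticulated cherry of N with b the reticulation leaf. Let N' be obtained from N by cutting {a, b}. Then for every leaf x ∈ X − {b} and every non-leaf vertex v of N' , the number of directed paths in N' from v to x equals the number of directed paths in N from (the corresponding vertex) v to x; and for every non-leaf vertex v of N', the number of directed paths in N' from v to b equals the number of paths in N from v to b minus the number of paths in N from v to a. -/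
open Digraph'

lemma chain'_transGen {R : ℕ → ℕ → Prop} :
    ∀ (t : List ℕ) (y : ℕ), List.Chain' R (y :: t) → ∀ z ∈ t, Relation.TransGen R y z := by
  intro t
  induction t with
  | nil => intro y _ z hz; simp at hz
  | cons w t' ih =>
    intro y hc z hz
    have h1 : R y w := (List.isChain_cons_cons.mp hc).1
    rcases List.mem_cons.mp hz with rfl | hz'
    · exact Relation.TransGen.single h1
    · exact Relation.TransGen.head h1 (ih w (List.isChain_cons_cons.mp hc).2 z hz')

lemma nodup_of_chain' {R : ℕ → ℕ → Prop}
    (hR : ∀ u v, R u v → ¬ Relation.ReflTransGen R v u) :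
    ∀ l : List ℕ, List.Chain' R l → l.Nodup := by
  intro l; induction l with
  | nil => simp
  | cons x t ih =>
    intro hc
    refine List.nodup_cons.mpr ⟨?_, ih hc.tail⟩
    intro hx
    obtain ⟨c, hxc, hcx⟩ := Relation.TransGen.head'_iff.mp (chain'_transGen t x hc x hx)
    exact hR x c hxc hcx

lemma chain'_mem {R : ℕ → ℕ → Prop} :
    ∀ (l : List ℕ), List.Chain' R l → ∀ y ∈ l, l.head? = some y ∨ ∃ z, R z y := by
  intro l hc y hy
  cases l with
  | nil => simp at hy
  | cons x t =>
    rcases List.mem_cons.mp hy with rfl | hy'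
    · exact Or.inl rfl
    · obtain ⟨z, _, hz⟩ := Relation.TransGen.tail'_iff.mp (chain'_transGen t x hc y hy')
      exact Or.inr ⟨z, hz⟩

lemma finite_bounded (s : Finset ℕ) :
    ∀ n : ℕ, {l : List ℕ | l.length ≤ n ∧ ∀ y ∈ l, y ∈ s}.Finite := by
  intro n; induction n with
  | zero =>
    apply Set.Finite.subset (Set.finite_singleton ([] : List ℕ))
    rintro l ⟨hl, -⟩
    simp only [Set.mem_singleton_iff]
    exact List.length_eq_zero_iff.mp (Nat.le_zero.mp hl)
  | succ n ih =>
    apply Set.Finite.subset (((s.finite_toSet.prod ih).image (fun p => p.1 :: p.2)).insert [])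
    rintro l ⟨hl, hm⟩
    cases l with
    | nil => exact Set.mem_insert _ _
    | cons y t =>
      refine Set.mem_insert_of_mem _ ⟨⟨y, t⟩, ⟨?_, ?_, ?_⟩, rfl⟩
      · exact hm y (by simp)
      · exact Nat.succ_le_succ_iff.mp hl
      · intro z hz; exact hm z (List.mem_cons_of_mem _ hz)

lemma concat_inj (x : ℕ) : Function.Injective (fun l : List ℕ => l ++ [x]) := by
  intro l₁ l₂ h
  have := congrArg List.dropLast h
  simpa [List.dropLast_concat] using this

def PS (M : Digraph') (u x : ℕ) : Set (List ℕ) :=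
  {l : List ℕ | l.head? = some u ∧ l.getLast? = some x ∧
    l.Chain' (fun p q => (p, q) ∈ M.A)}

lemma numPaths_eq_PS (M : Digraph') (u x : ℕ) : numPaths M u x = (PS M u x).ncard := rfl

lemma PS_finite (M : Digraph') (hac : M.Acyclic) (u x : ℕ) : (PS M u x).Finite := by
  apply Set.Finite.subset (finite_bounded (insert u M.V) (insert u M.V).card)
  rintro l ⟨hh, -, hc⟩
  have hmem : ∀ y ∈ l, y ∈ insert u M.V := by
    intro y hy
    rcases chain'_mem l hc y hy with h1 | ⟨z, hz⟩
    · rw [hh] at h1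
      exact (Option.some_inj.mp h1) ▸ Finset.mem_insert_self _ _
    · exact Finset.mem_insert_of_mem (M.mem_V _ hz).2
  have hnd : l.Nodup := nodup_of_chain' (fun p q hpq => hac p q hpq) l hc
  refine ⟨?_, hmem⟩
  have h1 : l.toFinset.card = l.length := List.toFinset_card_of_nodup hnd
  rw [← h1]
  exact Finset.card_le_card (fun y hy => hmem y (List.mem_toFinset.mp hy))

lemma PS_peel (M : Digraph') (v x p : ℕ) (hvx : v ≠ x) (harc : (p, x) ∈ M.A)
    (huniq : ∀ z, (z, x) ∈ M.A → z = p) :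
    PS M v x = (fun l => l ++ [x]) '' PS M v p := by
  ext l
  constructor
  · rintro ⟨hh, hl, hc⟩
    have hne : l ≠ [] := by rintro rfl; simp at hh
    have hdec : l.dropLast ++ [x] = l := by
      have hlast : l.getLast hne = x := by
        rw [List.getLast?_eq_getLast hne] at hl; exact Option.some_inj.mp hl
      rw [← hlast]; exact List.dropLast_append_getLast hne
    have hdne : l.dropLast ≠ [] := by
      rintro hnil
      rw [hnil, List.nil_append] at hdec
      rw [← hdec] at hh
      simp only [List.head?_cons, Option.some_inj] at hh
      exact hvx hh.symm
    rw [← hdec, List.Chain', List.isChain_append] at hc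
    obtain ⟨hc1, -, hrel⟩ := hc
    have hgl : l.dropLast.getLast? = some (l.dropLast.getLast hdne) :=
      List.getLast?_eq_getLast hdne
    have hgp : l.dropLast.getLast hdne = p := by
      apply huniq
      exact hrel _ hgl x rfl
    refine ⟨l.dropLast, ⟨?_, ?_, hc1⟩, hdec⟩
    · rw [← hdec, List.head?_append] at hh
      cases hm : l.dropLast.head? with
      | none => exact absurd (List.head?_eq_none_iff.mp hm) hdne
      | some c => rw [hm] at hh; simpa using hh
    · rw [hgl, hgp]
  · rintro ⟨m, ⟨hh, hl, hc⟩, rfl⟩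
    refine ⟨?_, (List.getLast?_concat (l := m)), ?_⟩
    · rw [List.head?_append, hh]; rfl
    · rw [List.Chain', List.isChain_append]
      refine ⟨hc, List.isChain_singleton x, ?_⟩
      intro c hcm y hy
      simp only [List.head?_cons, Option.mem_def, Option.some_inj] at hy
      subst hy
      rw [hl] at hcm
      simp only [Option.mem_def, Option.some_inj] at hcm
      subst hcm
      exact harc

lemma PS_peel2 (M : Digraph') (v x p r : ℕ) (hvx : v ≠ x)
    (hp : (p, x) ∈ M.A) (hr : (r, x) ∈ M.A)
    (huniq : ∀ z, (z, x) ∈ M.A → z = p ∨ z = r) :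
    PS M v x = ((fun l => l ++ [x]) '' PS M v p) ∪ ((fun l => l ++ [x]) '' PS M v r) := by
  ext l
  constructor
  · rintro ⟨hh, hl, hc⟩
    have hne : l ≠ [] := by rintro rfl; simp at hh
    have hdec : l.dropLast ++ [x] = l := by
      have hlast : l.getLast hne = x := by
        rw [List.getLast?_eq_getLast hne] at hl; exact Option.some_inj.mp hl
      rw [← hlast]; exact List.dropLast_append_getLast hne
    have hdne : l.dropLast ≠ [] := by
      rintro hnil
      rw [hnil, List.nil_append] at hdec
      rw [← hdec] at hh
      simp only [List.head?_cons, Option.some_inj] at hh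
      exact hvx hh.symm
    rw [← hdec, List.Chain', List.isChain_append] at hc
    obtain ⟨hc1, -, hrel⟩ := hc
    have hgl : l.dropLast.getLast? = some (l.dropLast.getLast hdne) :=
      List.getLast?_eq_getLast hdne
    have hhd : l.dropLast.head? = some v := by
      rw [← hdec, List.head?_append] at hh
      cases hm : l.dropLast.head? with
      | none => exact absurd (List.head?_eq_none_iff.mp hm) hdne
      | some c => rw [hm] at hh; simpa using hh
    rcases huniq _ (hrel _ hgl x rfl) with hgp | hgp
    · exact Or.inl ⟨l.dropLast, ⟨hhd, by rw [hgl, hgp], hc1⟩, hdec⟩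
    · exact Or.inr ⟨l.dropLast, ⟨hhd, by rw [hgl, hgp], hc1⟩, hdec⟩
  · rintro (⟨m, ⟨hh, hl, hc⟩, rfl⟩ | ⟨m, ⟨hh, hl, hc⟩, rfl⟩) <;>
    · refine ⟨by rw [List.head?_append, hh]; rfl, (List.getLast?_concat (l := m)), ?_⟩
      rw [List.Chain', List.isChain_append]
      refine ⟨hc, List.isChain_singleton x, ?_⟩
      intro c hcm y hy
      simp only [List.head?_cons, Option.mem_def, Option.some_inj] at hy
      subst hy
      rw [hl] at hcm
      simp only [Option.mem_def, Option.some_inj] at hcm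
      subst hcm
      first | exact hp | exact hr

/-- after cutting a reticulated cherry `{a, b}` (with `b` the
reticulation leaf), path counts from each surviving non-leaf vertex to each leaf
`x ≠ b` are unchanged, while the path count to `b` equals the old count to `b`
minus the old count to `a`. -/
theorem stmt_17 (N N' : Digraph') (X : Finset ℕ) (a b : ℕ)
    (h : N.IsPhylo X) (hX : 2 ≤ X.card)
    (hrc : N.IsRetCherry a b)
    (hcut : CutRetCherry N N' a b) :
    (∀ x ∈ X, x ≠ b → ∀ v ∈ N'.V, v ∉ X → numPaths N' v x = numPaths N v x) ∧
    (∀ v ∈ N'.V, v ∉ X → numPaths N' v b + numPaths N v a = numPaths N v b) := by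
  obtain ⟨hrc', pa, pb, ua, q, hpaa, hpbb, hinpb2, hpapb, huapa, hqpb, hqpa, hV', hA'⟩ := hcut
  obtain ⟨hab, hla, hlb, -⟩ := hrc'
  have hirr : ∀ u w : ℕ, (u, w) ∈ N.A → u ≠ w := by
    intro u w huw heq
    subst heq
    exact h.acyclic u u huw Relation.ReflTransGen.refl
  -- leaves have no out-arcs
  have houta : ∀ c, (a, c) ∉ N.A := by
    intro c hc
    have h0 : (N.A.filter (fun e => e.1 = a)).card = 0 := hla.2
    have hm : (a, c) ∈ N.A.filter (fun e => e.1 = a) := Finset.mem_filter.mpr ⟨hc, rfl⟩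
    rw [Finset.card_eq_zero.mp h0] at hm
    exact absurd hm (Finset.notMem_empty _)
  have houtb : ∀ c, (b, c) ∉ N.A := by
    intro c hc
    have h0 : (N.A.filter (fun e => e.1 = b)).card = 0 := hlb.2
    have hm : (b, c) ∈ N.A.filter (fun e => e.1 = b) := Finset.mem_filter.mpr ⟨hc, rfl⟩
    rw [Finset.card_eq_zero.mp h0] at hm
    exact absurd hm (Finset.notMem_empty _)
  -- distinctness (first batch)
  have hapb : a ≠ pb := by rintro rfl; exact houta b hpbb
  have hpa_a : pa ≠ a := hirr _ _ hpaa
  have hpapbne : pa ≠ pb := hirr _ _ hpapb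
  have hpbbne : pb ≠ b := hirr _ _ hpbb
  have hbpa : b ≠ pa := by rintro rfl; exact houtb a hpaa
  have huaa : ua ≠ a := by rintro rfl; exact houta pa huapa
  have huab : ua ≠ b := by rintro rfl; exact houtb pa huapa
  have huapane : ua ≠ pa := hirr _ _ huapa
  have hqa : q ≠ a := by rintro rfl; exact houta pb hqpb
  have hqb : q ≠ b := by rintro rfl; exact houtb pb hqpb
  have hqpbne : q ≠ pb := hirr _ _ hqpb
  -- vertex memberships
  have hpaV : pa ∈ N.V := (N.mem_V _ hpaa).1
  have haV : a ∈ N.V := (N.mem_V _ hpaa).2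
  have hpbV : pb ∈ N.V := (N.mem_V _ hpbb).1
  have hbV : b ∈ N.V := (N.mem_V _ hpbb).2
  -- helpers on cards
  have hcard2 : ∀ (s : Finset (ℕ × ℕ)) (e₁ e₂ : ℕ × ℕ), s.card = 2 → e₁ ∈ s → e₂ ∈ s →
      e₁ ≠ e₂ → ∀ e ∈ s, e = e₁ ∨ e = e₂ := by
    intro s e₁ e₂ hc h1 h2 hne e he
    have hsub : ({e₁, e₂} : Finset (ℕ × ℕ)) ⊆ s := by
      intro z hz
      rcases Finset.mem_insert.mp hz with rfl | hz
      · exact h1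
      · rw [Finset.mem_singleton.mp hz]; exact h2
    have heq : ({e₁, e₂} : Finset (ℕ × ℕ)) = s := by
      apply Finset.eq_of_subset_of_card_le hsub
      rw [hc, Finset.card_insert_of_notMem (by simp [hne]), Finset.card_singleton]
    rw [← heq] at he
    simpa using he
  have hcard1 : ∀ (s : Finset (ℕ × ℕ)) (e₁ : ℕ × ℕ), s.card = 1 → e₁ ∈ s →
      ∀ e ∈ s, e = e₁ := by
    intro s e₁ hc h1 e he
    obtain ⟨e', he'⟩ := Finset.card_eq_one.mp hc
    rw [he'] at h1 he
    rw [Finset.mem_singleton.mp he, ← Finset.mem_singleton.mp h1]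
  -- degrees of pa
  have h2le : 2 ≤ N.outDeg pa := by
    show 2 ≤ (N.A.filter (fun e => e.1 = pa)).card
    have hsub : ({(pa, a), (pa, pb)} : Finset (ℕ × ℕ)) ⊆ N.A.filter (fun e => e.1 = pa) := by
      intro e he
      rcases Finset.mem_insert.mp he with rfl | he
      · exact Finset.mem_filter.mpr ⟨hpaa, rfl⟩
      · rw [Finset.mem_singleton.mp he]; exact Finset.mem_filter.mpr ⟨hpapb, rfl⟩
    have := Finset.card_le_card hsub
    rwa [Finset.card_insert_of_notMem (by simp [hapb]), Finset.card_singleton] at this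
  have h1le : 1 ≤ N.inDeg pa := by
    show 1 ≤ (N.A.filter (fun e => e.2 = pa)).card
    exact Finset.card_pos.mpr ⟨(ua, pa), Finset.mem_filter.mpr ⟨huapa, rfl⟩⟩
  have hdeg_pa : N.inDeg pa = 1 ∧ N.outDeg pa = 2 := by
    rcases h.degrees pa hpaV with ⟨h1, h2⟩ | ⟨h1, h2⟩ | ⟨h1, h2⟩ | ⟨h1, h2⟩ <;>
      exact ⟨by omega, by omega⟩
  have hdeg_a : N.inDeg a = 1 := by
    have h0 : N.outDeg a = 0 := hla.2
    rcases h.degrees a haV with ⟨h1, h2⟩ | ⟨h1, h2⟩ | ⟨h1, h2⟩ | ⟨h1, h2⟩ <;> omega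
  have hdeg_b : N.inDeg b = 1 := by
    have h0 : N.outDeg b = 0 := hlb.2
    rcases h.degrees b hbV with ⟨h1, h2⟩ | ⟨h1, h2⟩ | ⟨h1, h2⟩ | ⟨h1, h2⟩ <;> omega
  have hdeg_pb : N.outDeg pb = 1 := by
    rcases h.degrees pb hpbV with ⟨h1, h2⟩ | ⟨h1, h2⟩ | ⟨h1, h2⟩ | ⟨h1, h2⟩ <;> omega
  -- uniqueness of arcs
  have hina : ∀ z, (z, a) ∈ N.A → z = pa := by
    intro z hz
    have := hcard1 _ (pa, a) hdeg_a (Finset.mem_filter.mpr ⟨hpaa, rfl⟩)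
      (z, a) (Finset.mem_filter.mpr ⟨hz, rfl⟩)
    exact congrArg Prod.fst this
  have hinb : ∀ z, (z, b) ∈ N.A → z = pb := by
    intro z hz
    have := hcard1 _ (pb, b) hdeg_b (Finset.mem_filter.mpr ⟨hpbb, rfl⟩)
      (z, b) (Finset.mem_filter.mpr ⟨hz, rfl⟩)
    exact congrArg Prod.fst this
  have hinpa : ∀ z, (z, pa) ∈ N.A → z = ua := by
    intro z hz
    have := hcard1 _ (ua, pa) hdeg_pa.1 (Finset.mem_filter.mpr ⟨huapa, rfl⟩)
      (z, pa) (Finset.mem_filter.mpr ⟨hz, rfl⟩)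
    exact congrArg Prod.fst this
  have houtpa : ∀ c, (pa, c) ∈ N.A → c = a ∨ c = pb := by
    intro c hc
    rcases hcard2 _ (pa, a) (pa, pb) hdeg_pa.2 (Finset.mem_filter.mpr ⟨hpaa, rfl⟩)
      (Finset.mem_filter.mpr ⟨hpapb, rfl⟩) (by simp [hapb]) (pa, c)
      (Finset.mem_filter.mpr ⟨hc, rfl⟩) with he | he
    · exact Or.inl (congrArg Prod.snd he)
    · exact Or.inr (congrArg Prod.snd he)
  have houtpb : ∀ c, (pb, c) ∈ N.A → c = b := by
    intro c hc
    have := hcard1 _ (pb, b) hdeg_pb (Finset.mem_filter.mpr ⟨hpbb, rfl⟩)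
      (pb, c) (Finset.mem_filter.mpr ⟨hc, rfl⟩)
    exact congrArg Prod.snd this
  have hinpb : ∀ z, (z, pb) ∈ N.A → z = pa ∨ z = q := by
    intro z hz
    rcases hcard2 _ (pa, pb) (q, pb) hinpb2 (Finset.mem_filter.mpr ⟨hpapb, rfl⟩)
      (Finset.mem_filter.mpr ⟨hqpb, rfl⟩) (by simp [Ne.symm hqpa]) (z, pb)
      (Finset.mem_filter.mpr ⟨hz, rfl⟩) with he | he
    · exact Or.inl (congrArg Prod.fst he)
    · exact Or.inr (congrArg Prod.fst he)
  have huapb : ua ≠ pb := by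
    rintro rfl
    exact hbpa (houtpb pa huapa).symm
  -- leaf sets
  have haX : a ∈ X := (h.leafSet a haV).mp hla.2
  have hbX : b ∈ X := (h.leafSet b hbV).mp hlb.2
  have hpaX : pa ∉ X := by
    intro hx
    have := (h.leafSet pa hpaV).mpr hx
    omega
  have hpbX : pb ∉ X := by
    intro hx
    have := (h.leafSet pb hpbV).mpr hx
    have h1 := hdeg_pb
    omega
  -- N' arc membership
  have hmemA' : ∀ e : ℕ × ℕ, e ∈ N'.A ↔ e = (ua, a) ∨ e = (q, b) ∨
      (e ∈ N.A ∧ e ≠ (pa, pb) ∧ e ≠ (ua, pa) ∧ e ≠ (pa, a) ∧ e ≠ (q, pb) ∧ e ≠ (pb, b)) := by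
    intro e
    rw [hA']
    simp only [Finset.mem_insert, Finset.mem_erase]
    tauto
  have harc'ua : (ua, a) ∈ N'.A := (hmemA' _).mpr (Or.inl rfl)
  have harc'q : (q, b) ∈ N'.A := (hmemA' _).mpr (Or.inr (Or.inl rfl))
  have hina' : ∀ z, (z, a) ∈ N'.A → z = ua := by
    intro z hz
    rcases (hmemA' _).mp hz with he | he | ⟨hm, -, -, hne3, -, -⟩
    · exact congrArg Prod.fst he
    · exact absurd (congrArg Prod.snd he) hab
    · have := hina z hm
      subst this
      exact absurd rfl hne3
  have hinb' : ∀ z, (z, b) ∈ N'.A → z = q := by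
    intro z hz
    rcases (hmemA' _).mp hz with he | he | ⟨hm, -, -, -, -, hne5⟩
    · exact absurd (congrArg Prod.snd he).symm hab
    · exact congrArg Prod.fst he
    · have := hinb z hm
      subst this
      exact absurd rfl hne5
  -- paths in N ending at a "good" vertex never touch pa, pb, a, b
  have hend : ∀ (t : List ℕ) (z : ℕ), (z = pa ∨ z = pb ∨ z = a ∨ z = b) →
      List.Chain' (fun p r => (p, r) ∈ N.A) (z :: t) → ∀ w, w ≠ pa → w ≠ pb → w ≠ a → w ≠ b →
      (z :: t).getLast? ≠ some w := by
    intro t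
    induction t with
    | nil =>
      intro z hz hc w hwpa hwpb hwa hwb hlast
      simp only [List.getLast?_singleton, Option.some_inj] at hlast
      subst hlast
      rcases hz with rfl | rfl | rfl | rfl
      exacts [hwpa rfl, hwpb rfl, hwa rfl, hwb rfl]
    | cons c t' ih =>
      intro z hz hc w hwpa hwpb hwa hwb hlast
      have hzc : (z, c) ∈ N.A := (List.isChain_cons_cons.mp hc).1
      have hc' : c = pa ∨ c = pb ∨ c = a ∨ c = b := by
        rcases hz with rfl | rfl | rfl | rfl
        · rcases houtpa c hzc with rfl | rfl
          · exact Or.inr (Or.inr (Or.inl rfl))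
          · exact Or.inr (Or.inl rfl)
        · exact Or.inr (Or.inr (Or.inr (houtpb c hzc)))
        · exact absurd hzc (houta c)
        · exact absurd hzc (houtb c)
      rw [List.getLast?_cons_cons] at hlast
      exact ih c hc' (List.isChain_cons_cons.mp hc).2 w hwpa hwpb hwa hwb hlast
  -- transfer lemma
  have htrans : ∀ w, w ≠ pa → w ≠ pb → w ≠ a → w ≠ b → ∀ v', PS N' v' w = PS N v' w := by
    intro w hwpa hwpb hwa hwb v'
    have hNN' : ∀ l : List ℕ, l.getLast? = some w →
        (List.Chain' (fun p r => (p, r) ∈ N.A) l ↔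
          List.Chain' (fun p r => (p, r) ∈ N'.A) l) := by
      intro l
      induction l with
      | nil => intro _; exact ⟨fun _ => List.isChain_nil, fun _ => List.isChain_nil⟩
      | cons y t ih =>
        intro hlast
        cases t with
        | nil => exact ⟨fun _ => List.isChain_singleton _, fun _ => List.isChain_singleton _⟩
        | cons c t' =>
          rw [List.getLast?_cons_cons] at hlast
          constructor
          · intro hcc
            have hyc := (List.isChain_cons_cons.mp hcc).1
            have htc := (List.isChain_cons_cons.mp hcc).2
            refine List.isChain_cons_cons.mpr ⟨?_, (ih hlast).mp htc⟩
            apply (hmemA' _).mpr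
            refine Or.inr (Or.inr ⟨hyc, ?_, ?_, ?_, ?_, ?_⟩)
            · intro he
              exact hend t' c (Or.inr (Or.inl (congrArg Prod.snd he))) htc w hwpa hwpb hwa hwb hlast
            · intro he
              exact hend t' c (Or.inl (congrArg Prod.snd he)) htc w hwpa hwpb hwa hwb hlast
            · intro he
              exact hend t' c (Or.inr (Or.inr (Or.inl (congrArg Prod.snd he)))) htc w hwpa hwpb hwa hwb hlast
            · intro he
              exact hend t' c (Or.inr (Or.inl (congrArg Prod.snd he))) htc w hwpa hwpb hwa hwb hlast
            · intro he
              exact hend t' c (Or.inr (Or.inr (Or.inr (congrArg Prod.snd he)))) htc w hwpa hwpb hwa hwb hlast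
          · intro hcc
            have hyc' := (List.isChain_cons_cons.mp hcc).1
            have htc' := (List.isChain_cons_cons.mp hcc).2
            have htc : List.Chain' (fun p r => (p, r) ∈ N.A) (c :: t') := (ih hlast).mpr htc'
            refine List.isChain_cons_cons.mpr ⟨?_, htc⟩
            rcases (hmemA' _).mp hyc' with he | he | ⟨hm, -⟩
            · exact absurd hlast
                (hend t' c (Or.inr (Or.inr (Or.inl (congrArg Prod.snd he)))) htc w hwpa hwpb hwa hwb)
            · exact absurd hlast
                (hend t' c (Or.inr (Or.inr (Or.inr (congrArg Prod.snd he)))) htc w hwpa hwpb hwa hwb)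
            · exact hm
    ext l
    simp only [PS, Set.mem_setOf_eq]
    constructor
    · rintro ⟨h1, h2, h3⟩
      exact ⟨h1, h2, (hNN' l h2).mpr h3⟩
    · rintro ⟨h1, h2, h3⟩
      exact ⟨h1, h2, (hNN' l h2).mp h3⟩
  constructor
  · -- part 1
    intro x hxX hxb v hvV' hvX
    have hva : v ≠ a := by rintro rfl; exact hvX haX
    have hvmem := hV' ▸ hvV'
    have hvpb : v ≠ pb := (Finset.mem_erase.mp hvmem).1
    have hvpa : v ≠ pa := (Finset.mem_erase.mp (Finset.mem_erase.mp hvmem).2).1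
    by_cases hxa : x = a
    · subst hxa
      have e1 : numPaths N' v x = (PS N v ua).ncard := by
        rw [numPaths_eq_PS, PS_peel N' v x ua hva harc'ua hina',
          Set.ncard_image_of_injective _ (concat_inj x),
          htrans ua huapane huapb huaa huab v]
      have e2 : numPaths N v x = (PS N v ua).ncard := by
        rw [numPaths_eq_PS, PS_peel N v x pa hva hpaa hina,
          Set.ncard_image_of_injective _ (concat_inj x),
          PS_peel N v pa ua hvpa huapa hinpa,
          Set.ncard_image_of_injective _ (concat_inj pa)]
      rw [e1, e2]
    · have hxpa : x ≠ pa := by rintro rfl; exact hpaX hxX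
      have hxpb : x ≠ pb := by rintro rfl; exact hpbX hxX
      rw [numPaths_eq_PS, numPaths_eq_PS, htrans x hxpa hxpb hxa hxb v]
  · -- part 2
    intro v hvV' hvX
    have hva : v ≠ a := by rintro rfl; exact hvX haX
    have hvb : v ≠ b := by rintro rfl; exact hvX hbX
    have hvmem := hV' ▸ hvV'
    have hvpb : v ≠ pb := (Finset.mem_erase.mp hvmem).1
    have hvpa : v ≠ pa := (Finset.mem_erase.mp (Finset.mem_erase.mp hvmem).2).1
    have hf1 : ((fun l => l ++ [pb]) '' PS N v pa).Finite :=
      (PS_finite N h.acyclic v pa).image _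
    have hf2 : ((fun l => l ++ [pb]) '' PS N v q).Finite :=
      (PS_finite N h.acyclic v q).image _
    have hdisj : Disjoint ((fun l => l ++ [pb]) '' PS N v pa)
        ((fun l => l ++ [pb]) '' PS N v q) := by
      rw [Set.disjoint_left]
      rintro l ⟨m1, ⟨-, hl1, -⟩, rfl⟩ ⟨m2, ⟨-, hl2, -⟩, heq⟩
      have : m2 = m1 := concat_inj pb heq
      subst this
      rw [hl1] at hl2
      exact hqpa (Option.some_inj.mp hl2).symm
    have e1 : numPaths N' v b = (PS N v q).ncard := by
      rw [numPaths_eq_PS, PS_peel N' v b q hvb harc'q hinb',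
        Set.ncard_image_of_injective _ (concat_inj b),
        htrans q hqpa hqpbne hqa hqb v]
    have e2 : numPaths N v a = (PS N v ua).ncard := by
      rw [numPaths_eq_PS, PS_peel N v a pa hva hpaa hina,
        Set.ncard_image_of_injective _ (concat_inj a),
        PS_peel N v pa ua hvpa huapa hinpa,
        Set.ncard_image_of_injective _ (concat_inj pa)]
    have e3 : (PS N v pa).ncard = (PS N v ua).ncard := by
      rw [PS_peel N v pa ua hvpa huapa hinpa,
        Set.ncard_image_of_injective _ (concat_inj pa)]
    have e4 : numPaths N v b = (PS N v pa).ncard + (PS N v q).ncard := by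
      rw [numPaths_eq_PS, PS_peel N v b pb hvb hpbb hinb,
        Set.ncard_image_of_injective _ (concat_inj b),
        PS_peel2 N v pb pa q hvpb hpapb hqpb hinpb,
        Set.ncard_union_eq hdisj hf1 hf2,
        Set.ncard_image_of_injective _ (concat_inj pb),
        Set.ncard_image_of_injective _ (concat_inj pb)]
    rw [e1, e2, e4, e3]
    omega
end
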